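/- arXiv:1606.00129 — 3 statements merged into one kernel-verified Lean document; each statement's English description precedes it below -/
import Mathlib

section
/- Let X be a geodesic metric space, N a Morse gauge, and let ℓ₁, ℓ₂ be N-Morse geodesics in X with ℓ₁(0) = ℓ₂(0) = e. Let x₁ = ℓ₁(v₁) and x₂ = ℓ₂(v₂) be points on ℓ₁ and ℓ₂ respectively, and let γ be any geodesic from x₁ to x₂. Then the geodesic triangle ℓ₁([0, v₁]) ∪ γ ∪ ℓ₂([0, v₂]) is 4N(3,0)-slim: each of the three sides is contained in the closed 4N(3,0)-neighbourhood of the union of the other two sides. -/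
open Set Filter

section Defs

variable {X : Type*} [MetricSpace X]

/-- A geodesic segment of length `L`, parametrized by arc length on `[0, L]`. -/
def IsGeodesicSeg (γ : ℝ → X) (L : ℝ) : Prop :=
  0 ≤ L ∧ ∀ s ∈ Icc (0:ℝ) L, ∀ t ∈ Icc (0:ℝ) L, dist (γ s) (γ t) = |s - t|

/-- A geodesic from `x` to `y`, parametrized by arc length on `[0, dist x y]`. -/
def IsGeodesicFromTo (γ : ℝ → X) (x y : X) : Prop :=
  IsGeodesicSeg γ (dist x y) ∧ γ 0 = x ∧ γ (dist x y) = y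

/-- A geodesic ray, parametrized by arc length on `[0, ∞)`. -/
def IsGeodesicRay (ℓ : ℝ → X) : Prop :=
  ∀ s ∈ Ici (0:ℝ), ∀ t ∈ Ici (0:ℝ), dist (ℓ s) (ℓ t) = |s - t|

/-- A geodesic metric space: any two points are joined by a geodesic. -/
def GeodesicSpace (X : Type*) [MetricSpace X] : Prop :=
  ∀ x y : X, ∃ γ : ℝ → X, IsGeodesicFromTo γ x y

/-- A `(K, C)`-quasi-geodesic defined on the interval `I ⊆ ℝ`. -/
def IsQuasiGeodesicOn (K C : ℝ) (I : Set ℝ) (σ : ℝ → X) : Prop :=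
  ∀ s ∈ I, ∀ t ∈ I,
    |s - t| / K - C ≤ dist (σ s) (σ t) ∧ dist (σ s) (σ t) ≤ K * |s - t| + C

/-- A Morse gauge: a nonnegative real `N K C` for every `K ≥ 1`, `C ≥ 0`. -/
def IsMorseGauge (N : ℝ → ℝ → ℝ) : Prop :=
  ∀ K C : ℝ, 1 ≤ K → 0 ≤ C → 0 ≤ N K C

/-- A subset `G ⊆ X` is `N`-Morse if for all `K ≥ 1`, `C ≥ 0`, every
`(K,C)`-quasi-geodesic with endpoints on `G` is contained in the closed
`N K C`-neighbourhood of `G`. -/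
def IsMorseSet (N : ℝ → ℝ → ℝ) (G : Set X) : Prop :=
  ∀ K C : ℝ, 1 ≤ K → 0 ≤ C → ∀ a b : ℝ, a ≤ b → ∀ σ : ℝ → X,
    IsQuasiGeodesicOn K C (Icc a b) σ → σ a ∈ G → σ b ∈ G →
    ∀ s ∈ Icc a b, ∃ g ∈ G, dist (σ s) g ≤ N K C

/-- An `N`-Morse geodesic from `x` to `y`. -/
def IsMorseGeodesicFromTo (N : ℝ → ℝ → ℝ) (γ : ℝ → X) (x y : X) : Prop :=
  IsGeodesicFromTo γ x y ∧ IsMorseSet N (γ '' Icc 0 (dist x y))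

/-- An `N`-Morse geodesic ray. -/
def IsMorseRay (N : ℝ → ℝ → ℝ) (ℓ : ℝ → X) : Prop :=
  IsGeodesicRay ℓ ∧ IsMorseSet N (ℓ '' Ici 0)

/-- The stratum `X^(N)_e`: points joined to `e` by an `N`-Morse geodesic. -/
def morseStratum (N : ℝ → ℝ → ℝ) (e : X) : Set X :=
  {y | ∃ γ : ℝ → X, IsMorseGeodesicFromTo N γ e y}

/-- The Gromov product `(x·y)_w`. -/
noncomputable def gprod (w x y : X) : ℝ := (dist w x + dist w y - dist x y) / 2

/-- A `B`-quasi-convex subset: geodesics with endpoints in `Y` stay in the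
closed `B`-neighbourhood of `Y`. -/
def IsQuasiConvex (B : ℝ) (Y : Set X) : Prop :=
  ∀ x ∈ Y, ∀ y ∈ Y, ∀ γ : ℝ → X, IsGeodesicFromTo γ x y →
    ∀ s ∈ Icc (0:ℝ) (dist x y), ∃ g ∈ Y, dist (γ s) g ≤ B

/-- An `N`-stable subset: quasi-convex, and any two of its points are joined
by an `N`-Morse geodesic of `X`. -/
def IsStableSubset (N : ℝ → ℝ → ℝ) (Y : Set X) : Prop :=
  (∃ B : ℝ, 0 ≤ B ∧ IsQuasiConvex B Y) ∧
    ∀ x ∈ Y, ∀ y ∈ Y, ∃ γ : ℝ → X, IsMorseGeodesicFromTo N γ x y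

variable {Y : Type*} [MetricSpace Y]

/-- A `(K,C)`-quasi-isometric embedding. -/
def IsQIEmbedding (K C : ℝ) (q : X → Y) : Prop :=
  ∀ x x' : X,
    dist x x' / K - C ≤ dist (q x) (q x') ∧ dist (q x) (q x') ≤ K * dist x x' + C

/-- A `(K,C)`-quasi-isometry. -/
def IsQuasiIsometry (K C : ℝ) (q : X → Y) : Prop :=
  IsQIEmbedding K C q ∧ ∀ y : Y, ∃ x : X, dist y (q x) ≤ C

end Defs

section Boundary

variable {X : Type*} [MetricSpace X]

/-- A sequence converges at infinity with respect to the basepoint `e`. -/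
def ConvAtInf (e : X) (f : ℕ → X) : Prop :=
  Tendsto (fun p : ℕ × ℕ => gprod e (f p.1) (f p.2)) atTop atTop

/-- Two sequences converging at infinity are equivalent. -/
def EquivAtInf (e : X) (f g : ℕ → X) : Prop :=
  Tendsto (fun p : ℕ × ℕ => gprod e (f p.1) (g p.2)) atTop atTop

/-- Sequences in `S` converging at infinity. -/
abbrev BSeq (S : Set X) (e : X) : Type _ :=
  {f : ℕ → X // (∀ n, f n ∈ S) ∧ ConvAtInf e f}

/-- The sequential boundary of `S ⊆ X` with basepoint `e`: sequences in `S`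
converging at infinity, up to equivalence. -/
def SeqBoundary (S : Set X) (e : X) : Type _ :=
  Quot (fun f g : BSeq S e => EquivAtInf e f.1 g.1)

/-- The boundary point represented by a convergent sequence. -/
def SeqBoundary.mk {S : Set X} {e : X} (f : BSeq S e) : SeqBoundary S e :=
  Quot.mk _ f

/-- The liminf of Gromov products of two sequences, valued in `EReal`. -/
noncomputable def seqGP (e : X) (f g : ℕ → X) : EReal :=
  Filter.liminf (fun p : ℕ × ℕ => ((gprod e (f p.1) (g p.2) : ℝ) : EReal)) atTop

/-- The Gromov product of two boundary points: the supremum over representing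
sequences of the liminf of Gromov products. -/
noncomputable def bGP (S : Set X) (e : X) (ξ η : SeqBoundary S e) : EReal :=
  sSup {r : EReal | ∃ f g : BSeq S e,
    SeqBoundary.mk f = ξ ∧ SeqBoundary.mk g = η ∧ r = seqGP e f.1 g.1}

open Classical in
/-- `exp (−ε·r)` for an extended real `r`, with value `0` at `r = ⊤`. -/
noncomputable def visGauge (ε : ℝ) (r : EReal) : ℝ :=
  if r = ⊤ then 0 else Real.exp (-ε * r.toReal)

/-- `d` is a visual metric on the sequential boundary of `S`:
a metric comparable to `exp(−ε·(Gromov product))` for some parameter `ε > 0`. -/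
def IsVisualMetric (S : Set X) (e : X)
    (d : SeqBoundary S e → SeqBoundary S e → ℝ) : Prop :=
  (∀ ξ η, 0 ≤ d ξ η) ∧ (∀ ξ η, d ξ η = d η ξ) ∧
  (∀ ξ η ζ, d ξ ζ ≤ d ξ η + d η ζ) ∧ (∀ ξ η, d ξ η = 0 ↔ ξ = η) ∧
  ∃ ε : ℝ, 0 < ε ∧ ∃ k₁ : ℝ, 0 < k₁ ∧ ∃ k₂ : ℝ, 0 < k₂ ∧
    ∀ ξ η, k₁ * visGauge ε (bGP S e ξ η) ≤ d ξ η ∧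
      d ξ η ≤ k₂ * visGauge ε (bGP S e ξ η)

/-- `η` is (the restriction of) a self-homeomorphism of `[0,∞)`. -/
def IsHomeoIci (η : ℝ → ℝ) : Prop :=
  ContinuousOn η (Ici 0) ∧ StrictMonoOn η (Ici 0) ∧ η 0 = 0 ∧
    Tendsto η atTop atTop ∧ ∀ t ∈ Ici (0:ℝ), 0 ≤ η t

/-- `F` is a quasi-symmetry onto its image, for the "distances" `dA`, `dB`. -/
def IsQuasiSymmetryOnto {A B : Type*} (dA : A → A → ℝ) (dB : B → B → ℝ)
    (F : A → B) : Prop :=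
  Function.Injective F ∧ ∃ η : ℝ → ℝ, IsHomeoIci η ∧
    ∀ x y z : A, x ≠ y → x ≠ z → y ≠ z →
      dB (F x) (F y) / dB (F x) (F z) ≤ η (dA x y / dA x z)

end Boundary

/-- `X` (with basepoint `x`) is stably subsumed by `Y` (with basepoint `y`):
every stratum of `X` quasi-isometrically embeds in some stratum of `Y`. -/
def StablySubsumed (X Y : Type*) [MetricSpace X] [MetricSpace Y]
    (x : X) (y : Y) : Prop :=
  ∀ N : ℝ → ℝ → ℝ, IsMorseGauge N →
    ∃ N' : ℝ → ℝ → ℝ, IsMorseGauge N' ∧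
      ∃ K C : ℝ, 1 ≤ K ∧ 0 ≤ C ∧ ∃ f : X → Y,
        (∀ a ∈ morseStratum N x, f a ∈ morseStratum N' y) ∧
        ∀ a ∈ morseStratum N x, ∀ b ∈ morseStratum N x,
          dist a b / K - C ≤ dist (f a) (f b) ∧ dist (f a) (f b) ≤ K * dist a b + C

/-- Durham–Taylor stability of `f : Y → X`. -/
def DTStable {Y X : Type*} [MetricSpace Y] [MetricSpace X] (f : Y → X) : Prop :=
  ∀ K C : ℝ, 1 ≤ K → 0 ≤ C → ∃ R : ℝ, 0 ≤ R ∧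
    ∀ a₁ b₁ a₂ b₂ : ℝ, a₁ ≤ b₁ → a₂ ≤ b₂ → ∀ σ₁ σ₂ : ℝ → X,
      IsQuasiGeodesicOn K C (Icc a₁ b₁) σ₁ → IsQuasiGeodesicOn K C (Icc a₂ b₂) σ₂ →
      σ₁ a₁ = σ₂ a₂ → σ₁ b₁ = σ₂ b₂ →
      σ₁ a₁ ∈ Set.range f → σ₁ b₁ ∈ Set.range f →
      (∀ s ∈ Icc a₁ b₁, ∃ t ∈ Icc a₂ b₂, dist (σ₁ s) (σ₂ t) ≤ R) ∧
      (∀ t ∈ Icc a₂ b₂, ∃ s ∈ Icc a₁ b₁, dist (σ₁ s) (σ₂ t) ≤ R)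

section SlimAux

variable {X : Type*} [MetricSpace X]

/-- Glue: a map satisfying the ordered two-point bounds is a (3,0)-quasi-geodesic. -/
private lemma slim_qg_of_ordered {I : Set ℝ} {σ : ℝ → X}
    (h : ∀ s ∈ I, ∀ t ∈ I, s ≤ t →
      (t - s) / 3 ≤ dist (σ s) (σ t) ∧ dist (σ s) (σ t) ≤ t - s) :
    IsQuasiGeodesicOn 3 0 I σ := by
  intro s hs t ht
  rcases le_total s t with hst | hst
  · obtain ⟨h1, h2⟩ := h s hs t ht hst
    have habs : |s - t| = t - s := by
      rw [abs_sub_comm]; exact abs_of_nonneg (by linarith)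
    rw [habs]
    constructor <;> linarith
  · obtain ⟨h1, h2⟩ := h t ht s hs hst
    have habs : |s - t| = s - t := abs_of_nonneg (by linarith)
    rw [habs, dist_comm]
    constructor <;> linarith

/-- A map satisfying the ordered upper bound is continuous on `I`. -/
private lemma slim_contOn_of_ordered {I : Set ℝ} {σ : ℝ → X}
    (h : ∀ s ∈ I, ∀ t ∈ I, s ≤ t → dist (σ s) (σ t) ≤ t - s) :
    ContinuousOn σ I := by
  have hl : LipschitzOnWith 1 σ I := by
    apply LipschitzOnWith.of_dist_le_mul
    intro x hx y hy
    rcases le_total x y with hxy | hxy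
    · have h1 := h x hx y hy hxy
      have h2 : y - x ≤ |x - y| := by rw [abs_sub_comm]; exact le_abs_self _
      calc dist (σ x) (σ y) ≤ y - x := h1
        _ ≤ 1 * dist x y := by rw [one_mul, Real.dist_eq]; exact h2
    · have h1 := h y hy x hx hxy
      have h2 : x - y ≤ |x - y| := le_abs_self _
      calc dist (σ x) (σ y) = dist (σ y) (σ x) := dist_comm _ _
        _ ≤ x - y := h1
        _ ≤ 1 * dist x y := by rw [one_mul, Real.dist_eq]; exact h2
  exact hl.continuousOn

/-- Key construction: a geodesic `ρ` from `e` to a point `p`, concatenated with a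
geodesic `φ` issuing from `p` all of whose points are at distance at least
`d = dist e p` from `e`, is a continuous (3,0)-quasi-geodesic. -/
private lemma slim_concat (e : X) (ρ φ : ℝ → X) (d L : ℝ)
    (hd : 0 ≤ d) (hL : 0 ≤ L)
    (hρ : ∀ s ∈ Icc (0:ℝ) d, ∀ t ∈ Icc (0:ℝ) d, dist (ρ s) (ρ t) = |s - t|)
    (hρ0 : ρ 0 = e)
    (hφ : ∀ s ∈ Icc (0:ℝ) L, ∀ t ∈ Icc (0:ℝ) L, dist (φ s) (φ t) = |s - t|)
    (hjoin : ρ d = φ 0)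
    (hmin : ∀ u ∈ Icc (0:ℝ) L, d ≤ dist e (φ u)) :
    ∀ s ∈ Icc (0:ℝ) (d + L), ∀ t ∈ Icc (0:ℝ) (d + L), s ≤ t →
      (t - s) / 3 ≤ dist ((fun r => if r ≤ d then ρ r else φ (r - d)) s)
          ((fun r => if r ≤ d then ρ r else φ (r - d)) t) ∧
        dist ((fun r => if r ≤ d then ρ r else φ (r - d)) s)
          ((fun r => if r ≤ d then ρ r else φ (r - d)) t) ≤ t - s := by
  intro s hs t ht hst
  obtain ⟨hs0, hsd⟩ := hs
  obtain ⟨ht0, htd⟩ := ht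
  simp only
  by_cases h1 : s ≤ d <;> by_cases h2 : t ≤ d
  · rw [if_pos h1, if_pos h2, hρ s ⟨hs0, h1⟩ t ⟨ht0, h2⟩]
    have habs : |s - t| = t - s := by
      rw [abs_sub_comm]; exact abs_of_nonneg (by linarith)
    rw [habs]; exact ⟨by linarith, le_rfl⟩
  · -- s ≤ d < t
    push_neg at h2
    rw [if_pos h1, if_neg (not_le.mpr h2)]
    have htdL : t - d ∈ Icc (0:ℝ) L := ⟨by linarith, by linarith⟩
    have h0L : (0:ℝ) ∈ Icc (0:ℝ) L := ⟨le_rfl, hL⟩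
    have hsd' : s ∈ Icc (0:ℝ) d := ⟨hs0, h1⟩
    have hdd : d ∈ Icc (0:ℝ) d := ⟨hd, le_rfl⟩
    have e1 : dist (ρ s) (ρ d) = d - s := by
      rw [hρ s hsd' d hdd, abs_of_nonpos (by linarith : s - d ≤ 0)]; ring
    have e2 : dist (φ 0) (φ (t - d)) = t - d := by
      rw [hφ 0 h0L (t - d) htdL, abs_of_nonpos (by linarith : (0:ℝ) - (t - d) ≤ 0)]; ring
    have e3 : dist e (ρ s) = s := by
      rw [← hρ0, hρ 0 ⟨le_rfl, hd⟩ s hsd', abs_of_nonpos (by linarith : (0:ℝ) - s ≤ 0)]; ring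
    have e4 : d ≤ dist e (φ (t - d)) := hmin _ htdL
    have e5 : dist (φ 0) (ρ s) = d - s := by rw [← hjoin, dist_comm]; exact e1
    have tri1 : dist (ρ s) (φ (t - d)) ≤ dist (ρ s) (ρ d) + dist (φ 0) (φ (t - d)) := by
      rw [hjoin]; exact dist_triangle _ _ _
    have tri2 : dist e (φ (t - d)) ≤ dist e (ρ s) + dist (ρ s) (φ (t - d)) :=
      dist_triangle _ _ _
    have tri3 : dist (φ 0) (φ (t - d)) ≤ dist (φ 0) (ρ s) + dist (ρ s) (φ (t - d)) :=
      dist_triangle _ _ _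
    constructor
    · rcases le_or_gt (t - d) (2 * (d - s)) with hcase | hcase
      · linarith
      · linarith
    · linarith
  · exact absurd (hst.trans h2) h1
  · push_neg at h1
    rw [if_neg (not_le.mpr h1), if_neg h2]
    have hsdL : s - d ∈ Icc (0:ℝ) L := ⟨by linarith, by linarith⟩
    have htdL : t - d ∈ Icc (0:ℝ) L := ⟨by linarith, by linarith⟩
    rw [hφ _ hsdL _ htdL, show s - d - (t - d) = s - t by ring]
    have habs : |s - t| = t - s := by
      rw [abs_sub_comm]; exact abs_of_nonneg (by linarith)
    rw [habs]; exact ⟨by linarith, le_rfl⟩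

/-- The main asymmetric half of the slim-triangle theorem. -/
private lemma slim_aux (N : ℝ → ℝ → ℝ) (hN0 : 0 ≤ N 3 0)
    (e : X) (ℓ ℓ' : ℝ → X) (L L' v v' c u₀ : ℝ)
    (hg : IsGeodesicSeg ℓ L) (hg' : IsGeodesicSeg ℓ' L')
    (hm : IsMorseSet N (ℓ '' Icc 0 L)) (hm' : IsMorseSet N (ℓ' '' Icc 0 L'))
    (he : ℓ 0 = e) (he' : ℓ' 0 = e)
    (hv : v ∈ Icc (0:ℝ) L) (hv' : v' ∈ Icc (0:ℝ) L')
    (γ : ℝ → X) (hc : 0 ≤ c)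
    (hγd : ∀ s ∈ Icc (0:ℝ) c, ∀ t ∈ Icc (0:ℝ) c, dist (γ s) (γ t) = |s - t|)
    (hγ0 : γ 0 = ℓ v) (hγc : γ c = ℓ' v')
    (hu₀ : u₀ ∈ Icc (0:ℝ) c)
    (hmin : ∀ u ∈ Icc (0:ℝ) c, dist e (γ u₀) ≤ dist e (γ u))
    (ρ : ℝ → X) (hρ : IsGeodesicFromTo ρ e (γ u₀)) :
    (∀ s ∈ Icc (0:ℝ) v, ∃ q ∈ (ℓ' '' Icc 0 v') ∪ (γ '' Icc 0 c),
        dist (ℓ s) q ≤ 4 * N 3 0) ∧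
      (∀ t ∈ Icc (0:ℝ) c, t ≤ u₀ → ∃ w ∈ Icc (0:ℝ) v,
        dist (γ t) (ℓ w) ≤ 4 * N 3 0) := by
  have hL0 : (0:ℝ) ≤ L := hg.1
  have hL0' : (0:ℝ) ≤ L' := hg'.1
  have hld := hg.2
  have hld' := hg'.2
  have h0v : (0:ℝ) ≤ v := hv.1
  have h0v' : (0:ℝ) ≤ v' := hv'.1
  have coordℓ : ∀ w ∈ Icc (0:ℝ) L, dist e (ℓ w) = w := by
    intro w hw
    rw [← he, hld 0 ⟨le_rfl, hL0⟩ w hw, zero_sub, abs_neg, abs_of_nonneg hw.1]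
  have coordℓ' : ∀ w ∈ Icc (0:ℝ) L', dist e (ℓ' w) = w := by
    intro w hw
    rw [← he', hld' 0 ⟨le_rfl, hL0'⟩ w hw, zero_sub, abs_neg, abs_of_nonneg hw.1]
  have hvv : dist e (ℓ v) = v := coordℓ v hv
  have hvv' : dist e (ℓ' v') = v' := coordℓ' v' hv'
  set d := dist e (γ u₀) with hddef
  have hd0 : 0 ≤ d := dist_nonneg
  have hρ0 : ρ 0 = e := hρ.2.1
  have hρd : ρ d = γ u₀ := hρ.2.2
  have hρdist := hρ.1.2
  have hdv : d ≤ v := by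
    have h := hmin 0 ⟨le_rfl, hc⟩
    rwa [hγ0, hvv] at h
  have hdv' : d ≤ v' := by
    have h := hmin c ⟨hc, le_rfl⟩
    rwa [hγc, hvv'] at h
  -- the left concatenation σL : e → γ u₀ → γ 0 = ℓ v
  have hφLmem : ∀ u ∈ Icc (0:ℝ) u₀, u₀ - u ∈ Icc (0:ℝ) c :=
    fun u hu => ⟨by linarith [hu.2], by linarith [hu₀.2, hu.1]⟩
  have hφLd : ∀ s ∈ Icc (0:ℝ) u₀, ∀ t ∈ Icc (0:ℝ) u₀,
      dist ((fun u => γ (u₀ - u)) s) ((fun u => γ (u₀ - u)) t) = |s - t| := by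
    intro s hs t ht
    show dist (γ (u₀ - s)) (γ (u₀ - t)) = |s - t|
    rw [hγd _ (hφLmem s hs) _ (hφLmem t ht),
      show u₀ - s - (u₀ - t) = t - s by ring, abs_sub_comm]
  have hjoinL : ρ d = (fun u => γ (u₀ - u)) 0 := by
    show ρ d = γ (u₀ - 0); rw [sub_zero]; exact hρd
  have hminL : ∀ u ∈ Icc (0:ℝ) u₀, d ≤ dist e ((fun u => γ (u₀ - u)) u) :=
    fun u hu => hmin _ (hφLmem u hu)
  have KL := slim_concat e ρ (fun u => γ (u₀ - u)) d u₀ hd0 hu₀.1 hρdist hρ0 hφLd hjoinL hminL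
  set σL : ℝ → X := fun r => if r ≤ d then ρ r else γ (u₀ - (r - d)) with hσLdef
  have KL' : ∀ s ∈ Icc (0:ℝ) (d + u₀), ∀ t ∈ Icc (0:ℝ) (d + u₀), s ≤ t →
      (t - s) / 3 ≤ dist (σL s) (σL t) ∧ dist (σL s) (σL t) ≤ t - s := KL
  have hQGL : IsQuasiGeodesicOn 3 0 (Icc 0 (d + u₀)) σL := slim_qg_of_ordered KL'
  have hσLcont : ContinuousOn σL (Icc 0 (d + u₀)) :=
    slim_contOn_of_ordered fun s hs t ht hst => (KL' s hs t ht hst).2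
  have hσL0 : σL 0 = e := by
    show (if (0:ℝ) ≤ d then ρ 0 else γ (u₀ - (0 - d))) = e
    rw [if_pos hd0]; exact hρ0
  have hσLend : σL (d + u₀) = ℓ v := by
    show (if d + u₀ ≤ d then ρ (d + u₀) else γ (u₀ - (d + u₀ - d))) = ℓ v
    by_cases h : d + u₀ ≤ d
    · have hu0 : u₀ = 0 := le_antisymm (by linarith) hu₀.1
      rw [if_pos h, show d + u₀ = d by rw [hu0]; ring, hρd, hu0, hγ0]
    · rw [if_neg h, show u₀ - (d + u₀ - d) = 0 by ring, hγ0]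
  have hσLγ : ∀ t ∈ Icc (0:ℝ) u₀, σL (d + (u₀ - t)) = γ t := by
    intro t htmem
    show (if d + (u₀ - t) ≤ d then ρ (d + (u₀ - t)) else γ (u₀ - (d + (u₀ - t) - d))) = γ t
    by_cases h : d + (u₀ - t) ≤ d
    · have htu : t = u₀ := le_antisymm htmem.2 (by linarith)
      rw [if_pos h, show d + (u₀ - t) = d by rw [htu]; ring, hρd]
      exact congrArg γ htu.symm
    · rw [if_neg h, show u₀ - (d + (u₀ - t) - d) = t by ring]
  have hσLρ : ∀ r, r ≤ d → σL r = ρ r := by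
    intro r hr
    show (if r ≤ d then ρ r else γ (u₀ - (r - d))) = ρ r
    rw [if_pos hr]
  have hmemL0 : σL 0 ∈ ℓ '' Icc 0 L := by
    rw [hσL0]; exact ⟨0, ⟨le_rfl, hL0⟩, he⟩
  have hmemLend : σL (d + u₀) ∈ ℓ '' Icc 0 L := by
    rw [hσLend]; exact ⟨v, hv, rfl⟩
  have HL : ∀ s ∈ Icc (0:ℝ) (d + u₀), ∃ g ∈ ℓ '' Icc 0 L, dist (σL s) g ≤ N 3 0 :=
    hm 3 0 (by norm_num) le_rfl 0 (d + u₀) (by linarith [hu₀.1]) σL hQGL hmemL0 hmemLend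
  -- the right concatenation σR : e → γ u₀ → γ c = ℓ' v'
  have hcu₀ : (0:ℝ) ≤ c - u₀ := by linarith [hu₀.2]
  have hφRmem : ∀ u ∈ Icc (0:ℝ) (c - u₀), u₀ + u ∈ Icc (0:ℝ) c :=
    fun u hu => ⟨by linarith [hu₀.1, hu.1], by linarith [hu.2]⟩
  have hφRd : ∀ s ∈ Icc (0:ℝ) (c - u₀), ∀ t ∈ Icc (0:ℝ) (c - u₀),
      dist ((fun u => γ (u₀ + u)) s) ((fun u => γ (u₀ + u)) t) = |s - t| := by
    intro s hs t ht
    show dist (γ (u₀ + s)) (γ (u₀ + t)) = |s - t|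
    rw [hγd _ (hφRmem s hs) _ (hφRmem t ht), show u₀ + s - (u₀ + t) = s - t by ring]
  have hjoinR : ρ d = (fun u => γ (u₀ + u)) 0 := by
    show ρ d = γ (u₀ + 0); rw [add_zero]; exact hρd
  have hminR : ∀ u ∈ Icc (0:ℝ) (c - u₀), d ≤ dist e ((fun u => γ (u₀ + u)) u) :=
    fun u hu => hmin _ (hφRmem u hu)
  have KR := slim_concat e ρ (fun u => γ (u₀ + u)) d (c - u₀) hd0 hcu₀ hρdist hρ0 hφRd hjoinR hminR
  set σR : ℝ → X := fun r => if r ≤ d then ρ r else γ (u₀ + (r - d)) with hσRdef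
  have KR' : ∀ s ∈ Icc (0:ℝ) (d + (c - u₀)), ∀ t ∈ Icc (0:ℝ) (d + (c - u₀)), s ≤ t →
      (t - s) / 3 ≤ dist (σR s) (σR t) ∧ dist (σR s) (σR t) ≤ t - s := KR
  have hQGR : IsQuasiGeodesicOn 3 0 (Icc 0 (d + (c - u₀))) σR := slim_qg_of_ordered KR'
  have hσR0 : σR 0 = e := by
    show (if (0:ℝ) ≤ d then ρ 0 else γ (u₀ + (0 - d))) = e
    rw [if_pos hd0]; exact hρ0
  have hσRend : σR (d + (c - u₀)) = ℓ' v' := by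
    show (if d + (c - u₀) ≤ d then ρ (d + (c - u₀)) else γ (u₀ + (d + (c - u₀) - d))) = ℓ' v'
    by_cases h : d + (c - u₀) ≤ d
    · have hcu : c = u₀ := le_antisymm (by linarith) hu₀.2
      rw [if_pos h, show d + (c - u₀) = d by rw [hcu]; ring, hρd, show u₀ = c from hcu.symm, hγc]
    · rw [if_neg h, show u₀ + (d + (c - u₀) - d) = c by ring, hγc]
  have hσRρ : ∀ r, r ≤ d → σR r = ρ r := by
    intro r hr
    show (if r ≤ d then ρ r else γ (u₀ + (r - d))) = ρ r
    rw [if_pos hr]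
  have hmemR0 : σR 0 ∈ ℓ' '' Icc 0 L' := by
    rw [hσR0]; exact ⟨0, ⟨le_rfl, hL0'⟩, he'⟩
  have hmemRend : σR (d + (c - u₀)) ∈ ℓ' '' Icc 0 L' := by
    rw [hσRend]; exact ⟨v', hv', rfl⟩
  have HR : ∀ s ∈ Icc (0:ℝ) (d + (c - u₀)), ∃ g ∈ ℓ' '' Icc 0 L', dist (σR s) g ≤ N 3 0 :=
    hm' 3 0 (by norm_num) le_rfl 0 (d + (c - u₀)) (by linarith) σR hQGR hmemR0 hmemRend
  constructor
  · -- Part 1 : the side `ℓ |[0,v]` is 4N(3,0)-close to `ℓ' |[0,v'] ∪ γ`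
    intro s hsmem
    have hfcont : ContinuousOn (fun τ => dist e (σL τ)) (Icc 0 (d + u₀)) :=
      Continuous.comp_continuousOn (continuous_const.dist continuous_id) hσLcont
    have hival : s ∈ Icc ((fun τ => dist e (σL τ)) 0) ((fun τ => dist e (σL τ)) (d + u₀)) := by
      simp only
      rw [hσL0, hσLend, dist_self, hvv]
      exact hsmem
    obtain ⟨τ, hτmem, hfτ⟩ :=
      intermediate_value_Icc (by linarith [hu₀.1, hd0] : (0:ℝ) ≤ d + u₀) hfcont hival
    simp only at hfτ
    obtain ⟨q₁, hq₁mem, hq₁⟩ := HL τ hτmem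
    obtain ⟨w, hwmem, rfl⟩ := hq₁mem
    have hws : |w - s| ≤ N 3 0 := by
      have h1 : dist e (ℓ w) = w := coordℓ w hwmem
      have h2 := abs_dist_sub_le (ℓ w) (σL τ) e
      rw [dist_comm (ℓ w) e, dist_comm (σL τ) e] at h2
      calc |w - s| = |dist e (ℓ w) - dist e (σL τ)| := by rw [h1, hfτ]
        _ ≤ dist (ℓ w) (σL τ) := h2
        _ ≤ N 3 0 := by rw [dist_comm]; exact hq₁
    have hsL : s ∈ Icc (0:ℝ) L := ⟨hsmem.1, le_trans hsmem.2 hv.2⟩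
    have h3 : dist (ℓ s) (ℓ w) = |s - w| := hld s hsL w hwmem
    have h5 : |s - w| ≤ N 3 0 := by rw [abs_sub_comm]; exact hws
    have h4 : dist (ℓ w) (σL τ) ≤ N 3 0 := by rw [dist_comm]; exact hq₁
    have hdist1 : dist (ℓ s) (σL τ) ≤ 2 * N 3 0 := by
      linarith [dist_triangle (ℓ s) (ℓ w) (σL τ)]
    by_cases hτd : τ ≤ d
    · -- ρ-point: pull back to ℓ' |[0, v']
      have hρτ : σL τ = ρ τ := hσLρ τ hτd
      have hτR : τ ∈ Icc (0:ℝ) (d + (c - u₀)) := ⟨hτmem.1, by linarith⟩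
      obtain ⟨q₂, hq₂mem, hq₂⟩ := HR τ hτR
      obtain ⟨w₂, hw₂mem, rfl⟩ := hq₂mem
      have hσRτ : σR τ = ρ τ := hσRρ τ hτd
      have h7 : dist (σL τ) (ℓ' w₂) ≤ N 3 0 := by rw [hρτ, ← hσRτ]; exact hq₂
      have heρτ : dist e (ρ τ) = τ := by
        rw [← hρ0, hρdist 0 ⟨le_rfl, hd0⟩ τ ⟨hτmem.1, hτd⟩, zero_sub, abs_neg,
          abs_of_nonneg hτmem.1]
      have hw₂v : w₂ ≤ v' + N 3 0 := by
        have h6 : dist e (ℓ' w₂) = w₂ := coordℓ' w₂ hw₂mem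
        have h8 := dist_triangle e (ρ τ) (ℓ' w₂)
        have h9 : dist (ρ τ) (ℓ' w₂) ≤ N 3 0 := by rw [← hσRτ]; exact hq₂
        linarith
      have hminmem : min w₂ v' ∈ Icc (0:ℝ) v' := ⟨le_min hw₂mem.1 h0v', min_le_right _ _⟩
      refine ⟨ℓ' (min w₂ v'), Or.inl ⟨min w₂ v', hminmem, rfl⟩, ?_⟩
      have h8 : dist (ℓ' w₂) (ℓ' (min w₂ v')) = |w₂ - min w₂ v'| :=
        hld' w₂ hw₂mem _ ⟨le_min hw₂mem.1 h0v', le_trans (min_le_right _ _) hv'.2⟩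
      have h9 : |w₂ - min w₂ v'| ≤ N 3 0 := by
        rcases le_total w₂ v' with h | h
        · rw [min_eq_left h, sub_self, abs_zero]; exact hN0
        · rw [min_eq_right h, abs_of_nonneg (by linarith)]; linarith
      linarith [dist_triangle (ℓ s) (σL τ) (ℓ' (min w₂ v')),
        dist_triangle (σL τ) (ℓ' w₂) (ℓ' (min w₂ v'))]
    · -- γ-point
      push_neg at hτd
      have hσLτ : σL τ = γ (u₀ - (τ - d)) := by
        show (if τ ≤ d then ρ τ else γ (u₀ - (τ - d))) = γ (u₀ - (τ - d))
        rw [if_neg (not_le.mpr hτd)]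
      refine ⟨σL τ, Or.inr ⟨u₀ - (τ - d),
        ⟨by linarith [hτmem.2], by linarith [hu₀.2, hτd.le]⟩, hσLτ.symm⟩, ?_⟩
      linarith
  · -- Part 2 : points `γ t` with `t ≤ u₀` are 4N(3,0)-close to `ℓ |[0,v]`
    intro t htmem htu₀
    have hpar : d + (u₀ - t) ∈ Icc (0:ℝ) (d + u₀) :=
      ⟨by linarith [htu₀, hd0], by linarith [htmem.1]⟩
    obtain ⟨q, hqmem, hq⟩ := HL _ hpar
    obtain ⟨w, hwmem, rfl⟩ := hqmem
    rw [hσLγ t ⟨htmem.1, htu₀⟩] at hq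
    by_cases hwv : w ≤ v + 3 * N 3 0
    · have hminmem : min w v ∈ Icc (0:ℝ) v := ⟨le_min hwmem.1 h0v, min_le_right _ _⟩
      refine ⟨min w v, hminmem, ?_⟩
      have h8 : dist (ℓ w) (ℓ (min w v)) = |w - min w v| :=
        hld w hwmem _ ⟨le_min hwmem.1 h0v, le_trans (min_le_right _ _) hv.2⟩
      have h9 : |w - min w v| ≤ 3 * N 3 0 := by
        rcases le_total w v with h | h
        · rw [min_eq_left h, sub_self, abs_zero]; linarith
        · rw [min_eq_right h, abs_of_nonneg (by linarith)]; linarith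
      linarith [dist_triangle (γ t) (ℓ w) (ℓ (min w v))]
    · push_neg at hwv
      -- the witness overshoots `v`; deduce `t ≤ 4 N(3,0)` by an IVT catching argument
      have hgt : v + 2 * N 3 0 < dist e (γ t) := by
        have h6 : dist e (ℓ w) = w := coordℓ w hwmem
        have h7 := dist_triangle e (γ t) (ℓ w)
        linarith
      have hγcont : ContinuousOn γ (Icc 0 c) := by
        apply slim_contOn_of_ordered
        intro s' hs' t' ht' hst'
        refine le_of_eq ?_
        rw [hγd s' hs' t' ht', abs_sub_comm, abs_of_nonneg (by linarith)]
      have hsub : Icc t u₀ ⊆ Icc (0:ℝ) c := Icc_subset_Icc htmem.1 hu₀.2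
      have hgc : ContinuousOn (fun u => dist e (γ u)) (Icc t u₀) :=
        (Continuous.comp_continuousOn (continuous_const.dist continuous_id)
          hγcont).mono hsub
      have hival : v + 2 * N 3 0 ∈
          Icc ((fun u => dist e (γ u)) u₀) ((fun u => dist e (γ u)) t) := by
        simp only
        constructor
        · linarith [hdv]
        · linarith
      obtain ⟨u', hu'mem, hgu'⟩ := intermediate_value_Icc' htu₀ hgc hival
      simp only at hgu'
      have hu'c : u' ∈ Icc (0:ℝ) c := hsub hu'mem
      have hpar' : d + (u₀ - u') ∈ Icc (0:ℝ) (d + u₀) :=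
        ⟨by linarith [hu'mem.2, hd0], by linarith [hu'mem.1, htmem.1]⟩
      obtain ⟨q', hq'mem, hq'⟩ := HL _ hpar'
      obtain ⟨w', hw'mem, rfl⟩ := hq'mem
      rw [hσLγ u' ⟨hu'c.1, hu'mem.2⟩] at hq'
      have h6' : dist e (ℓ w') = w' := coordℓ w' hw'mem
      have hw'v : |w' - v| ≤ 3 * N 3 0 := by
        have h2 := abs_dist_sub_le (ℓ w') (γ u') e
        rw [dist_comm (ℓ w') e, dist_comm (γ u') e, h6', hgu'] at h2
        have h3 : dist (ℓ w') (γ u') ≤ N 3 0 := by rw [dist_comm]; exact hq'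
        have h4 := abs_le.mp (le_trans h2 h3)
        exact abs_le.mpr ⟨by linarith [h4.1], by linarith [h4.2]⟩
      have h10 : dist (γ u') (ℓ v) = u' := by
        rw [← hγ0, hγd u' hu'c 0 ⟨le_rfl, hc⟩, sub_zero, abs_of_nonneg hu'c.1]
      have h11 : dist (ℓ w') (ℓ v) = |w' - v| := hld w' hw'mem v hv
      have hu'4 : u' ≤ 4 * N 3 0 := by
        linarith [dist_triangle (γ u') (ℓ w') (ℓ v)]
      refine ⟨v, ⟨h0v, le_rfl⟩, ?_⟩
      have h12 : dist (γ t) (ℓ v) = t := by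
        rw [← hγ0, hγd t htmem 0 ⟨le_rfl, hc⟩, sub_zero, abs_of_nonneg htmem.1]
      rw [h12]
      linarith [hu'mem.1]

end SlimAux

/-- triangles with two `N`-Morse sides issuing from `e` are
`4N(3,0)`-slim. -/
theorem statement15 {X : Type*} [MetricSpace X] (hX : GeodesicSpace X) (e : X)
    (N : ℝ → ℝ → ℝ) (hN : IsMorseGauge N)
    (ℓ₁ ℓ₂ : ℝ → X) (L₁ L₂ : ℝ)
    (hg₁ : IsGeodesicSeg ℓ₁ L₁) (hg₂ : IsGeodesicSeg ℓ₂ L₂)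
    (hm₁ : IsMorseSet N (ℓ₁ '' Icc 0 L₁)) (hm₂ : IsMorseSet N (ℓ₂ '' Icc 0 L₂))
    (he₁ : ℓ₁ 0 = e) (he₂ : ℓ₂ 0 = e)
    (v₁ v₂ : ℝ) (hv₁ : v₁ ∈ Icc (0:ℝ) L₁) (hv₂ : v₂ ∈ Icc (0:ℝ) L₂)
    (γ : ℝ → X) (hγ : IsGeodesicFromTo γ (ℓ₁ v₁) (ℓ₂ v₂)) :
    (∀ p ∈ ℓ₁ '' Icc 0 v₁,
      ∃ q ∈ (ℓ₂ '' Icc 0 v₂) ∪ (γ '' Icc 0 (dist (ℓ₁ v₁) (ℓ₂ v₂))),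
        dist p q ≤ 4 * N 3 0) ∧
    (∀ p ∈ ℓ₂ '' Icc 0 v₂,
      ∃ q ∈ (ℓ₁ '' Icc 0 v₁) ∪ (γ '' Icc 0 (dist (ℓ₁ v₁) (ℓ₂ v₂))),
        dist p q ≤ 4 * N 3 0) ∧
    (∀ p ∈ γ '' Icc 0 (dist (ℓ₁ v₁) (ℓ₂ v₂)),
      ∃ q ∈ (ℓ₁ '' Icc 0 v₁) ∪ (ℓ₂ '' Icc 0 v₂),
        dist p q ≤ 4 * N 3 0) := by
  have hN0 : 0 ≤ N 3 0 := hN 3 0 (by norm_num) le_rfl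
  set c := dist (ℓ₁ v₁) (ℓ₂ v₂) with hcdef
  have hγseg : IsGeodesicSeg γ c := hγ.1
  have hc0 : (0:ℝ) ≤ c := hγseg.1
  have hγd := hγseg.2
  have hγ0 : γ 0 = ℓ₁ v₁ := hγ.2.1
  have hγc : γ c = ℓ₂ v₂ := hγ.2.2
  have hγcont : ContinuousOn γ (Icc 0 c) := by
    apply slim_contOn_of_ordered
    intro s hs t ht hst
    refine le_of_eq ?_
    rw [hγd s hs t ht, abs_sub_comm, abs_of_nonneg (by linarith)]
  have hgcont : ContinuousOn (fun u => dist e (γ u)) (Icc 0 c) :=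
    Continuous.comp_continuousOn (continuous_const.dist continuous_id) hγcont
  obtain ⟨u₀, hu₀mem, hu₀min'⟩ :=
    isCompact_Icc.exists_isMinOn (nonempty_Icc.mpr hc0) hgcont
  have hmin : ∀ u ∈ Icc (0:ℝ) c, dist e (γ u₀) ≤ dist e (γ u) :=
    fun u hu => isMinOn_iff.mp hu₀min' u hu
  obtain ⟨ρ, hρ⟩ := hX e (γ u₀)
  obtain ⟨goal1, half31⟩ := slim_aux N hN0 e ℓ₁ ℓ₂ L₁ L₂ v₁ v₂ c u₀ hg₁ hg₂ hm₁ hm₂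
    he₁ he₂ hv₁ hv₂ γ hc0 hγd hγ0 hγc hu₀mem hmin ρ hρ
  -- the reversed data
  have hγd' : ∀ s ∈ Icc (0:ℝ) c, ∀ t ∈ Icc (0:ℝ) c,
      dist ((fun u => γ (c - u)) s) ((fun u => γ (c - u)) t) = |s - t| := by
    intro s hs t ht
    show dist (γ (c - s)) (γ (c - t)) = |s - t|
    rw [hγd (c - s) ⟨by linarith [hs.2], by linarith [hs.1]⟩
        (c - t) ⟨by linarith [ht.2], by linarith [ht.1]⟩,
      show c - s - (c - t) = t - s by ring, abs_sub_comm]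
  have hγ0' : (fun u => γ (c - u)) 0 = ℓ₂ v₂ := by
    show γ (c - 0) = ℓ₂ v₂; rw [sub_zero, hγc]
  have hγc' : (fun u => γ (c - u)) c = ℓ₁ v₁ := by
    show γ (c - c) = ℓ₁ v₁; rw [sub_self, hγ0]
  have hu₀mem' : c - u₀ ∈ Icc (0:ℝ) c := ⟨by linarith [hu₀mem.2], by linarith [hu₀mem.1]⟩
  have hmin' : ∀ u ∈ Icc (0:ℝ) c,
      dist e ((fun u => γ (c - u)) (c - u₀)) ≤ dist e ((fun u => γ (c - u)) u) := by
    intro u hu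
    show dist e (γ (c - (c - u₀))) ≤ dist e (γ (c - u))
    rw [show c - (c - u₀) = u₀ by ring]
    exact hmin (c - u) ⟨by linarith [hu.2], by linarith [hu.1]⟩
  have hρ' : IsGeodesicFromTo ρ e ((fun u => γ (c - u)) (c - u₀)) := by
    show IsGeodesicFromTo ρ e (γ (c - (c - u₀)))
    rw [show c - (c - u₀) = u₀ by ring]
    exact hρ
  obtain ⟨goal2, half32⟩ := slim_aux N hN0 e ℓ₂ ℓ₁ L₂ L₁ v₂ v₁ c (c - u₀) hg₂ hg₁ hm₂ hm₁
    he₂ he₁ hv₂ hv₁ (fun u => γ (c - u)) hc0 hγd' hγ0' hγc' hu₀mem' hmin' ρ hρ'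
  refine ⟨?_, ?_, ?_⟩
  · rintro p ⟨s, hsmem, rfl⟩
    exact goal1 s hsmem
  · rintro p ⟨s, hsmem, rfl⟩
    obtain ⟨q, hq, hdq⟩ := goal2 s hsmem
    refine ⟨q, ?_, hdq⟩
    rcases hq with h | h
    · exact Or.inl h
    · obtain ⟨u, hu, rfl⟩ := h
      exact Or.inr ⟨c - u, ⟨by linarith [hu.2], by linarith [hu.1]⟩, rfl⟩
  · rintro p ⟨t, htmem, rfl⟩
    rcases le_total t u₀ with h | h
    · obtain ⟨w, hw, hdw⟩ := half31 t htmem h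
      exact ⟨ℓ₁ w, Or.inl ⟨w, hw, rfl⟩, hdw⟩
    · obtain ⟨w, hw, hdw⟩ := half32 (c - t)
        ⟨by linarith [htmem.2], by linarith [htmem.1]⟩ (by linarith)
      rw [show c - (c - t) = t by ring] at hdw
      exact ⟨ℓ₂ w, Or.inr ⟨w, hw, rfl⟩, hdw⟩
end

section
/- Let Y be a quasi-geodesic metric space, X a geodesic metric space, and f : Y → X a quasi-isometric embedding. Then Y is stable in X in the sense of Durham–Taylor (i.e. for all K ≥ 1, C ≥ 0 there exists R = R(K,C) ≥ 0 such that any two (K,C)-quasi-geodesics in X with the same pair of endpoints in f(Y) are at Hausdorff distance less than R from each other) if and only if f(Y) is an N-stable subspace of X for some Morse gauge N. -/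
open Set Filter

section Helpers

private lemma max_lip (a x y : ℝ) : |max a x - max a y| ≤ |x - y| := by
  have key : ∀ u v : ℝ, max a u - max a v ≤ |u - v| := by
    intro u v
    have h1 : a ≤ max a v := le_max_left _ _
    have h2 : v ≤ max a v := le_max_right _ _
    have h3 : u - v ≤ |u - v| := le_abs_self _
    have h4 : max a u ≤ max a v + |u - v| :=
      max_le (by linarith [abs_nonneg (u - v)]) (by linarith)
    linarith
  rw [abs_sub_le_iff]
  exact ⟨key x y, by rw [abs_sub_comm]; exact key y x⟩

private lemma min_lip (b x y : ℝ) : |min x b - min y b| ≤ |x - y| := by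
  have key : ∀ u v : ℝ, min u b - min v b ≤ |u - v| := by
    intro u v
    have h1 : min u b ≤ u := min_le_left _ _
    have h2 : min u b ≤ b := min_le_right _ _
    have h3 : u - v ≤ |u - v| := le_abs_self _
    have h4 : min u b - |u - v| ≤ min v b :=
      le_min (by linarith) (by linarith [abs_nonneg (u - v)])
    linarith
  rw [abs_sub_le_iff]
  exact ⟨key x y, by rw [abs_sub_comm]; exact key y x⟩

private lemma geodesic_qg {X : Type*} [MetricSpace X] {K C : ℝ} (hK : 1 ≤ K) (hC : 0 ≤ C)
    {I : Set ℝ} {g : ℝ → X} (hg : ∀ s ∈ I, ∀ t ∈ I, dist (g s) (g t) = |s - t|) :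
    IsQuasiGeodesicOn K C I g := by
  intro s hs t ht
  rw [hg s hs t ht]
  have h1 : |s - t| / K ≤ |s - t| := div_le_self (abs_nonneg _) hK
  have h2 : |s - t| ≤ K * |s - t| := le_mul_of_one_le_left (abs_nonneg _) hK
  exact ⟨by linarith, by linarith⟩

private lemma ext_qg {X : Type*} [MetricSpace X] {K C B a b : ℝ} {φ : ℝ → X} {p q : X}
    (hK : 1 ≤ K) (hB : 0 ≤ B) (hab : a ≤ b)
    (hφ : IsQuasiGeodesicOn K C (Icc a b) φ)
    (hp : dist p (φ a) ≤ B) (hq : dist q (φ b) ≤ B) :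
    IsQuasiGeodesicOn K (C + 2*B + 2) (Icc (a-1) (b+1))
      (fun s => if s < a then p else if b < s then q else φ s) := by
  have hK0 : (0:ℝ) < K := by linarith
  have key : ∀ u : ℝ, u ∈ Icc (a-1) (b+1) →
      dist ((fun s => if s < a then p else if b < s then q else φ s) u)
        (φ (max a (min u b))) ≤ B ∧ |u - max a (min u b)| ≤ 1 := by
    intro u hu
    by_cases h1 : u < a
    · have hm : min u b = u := min_eq_left (le_trans h1.le hab)
      rw [hm, max_eq_left h1.le]
      simp only [if_pos h1]
      refine ⟨hp, ?_⟩
      rw [abs_sub_comm, abs_of_nonneg (by linarith)]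
      linarith [hu.1]
    · push_neg at h1
      by_cases h2 : b < u
      · have hm : min u b = b := min_eq_right h2.le
        rw [hm, max_eq_right hab]
        simp only [if_neg (not_lt.2 h1), if_pos h2]
        refine ⟨hq, ?_⟩
        rw [abs_of_nonneg (by linarith)]
        linarith [hu.2]
      · push_neg at h2
        have hm : min u b = u := min_eq_left h2
        rw [hm, max_eq_right h1]
        simp only [if_neg (not_lt.2 h1), if_neg (not_lt.2 h2)]
        simp [hB]
  intro s hs t ht
  obtain ⟨hds, hps⟩ := key s hs
  obtain ⟨hdt, hpt⟩ := key t ht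
  set s' := max a (min s b) with hs'
  set t' := max a (min t b) with ht'
  have hs'm : s' ∈ Icc a b := ⟨le_max_left _ _, max_le hab (min_le_right _ _)⟩
  have ht'm : t' ∈ Icc a b := ⟨le_max_left _ _, max_le hab (min_le_right _ _)⟩
  have hqg := hφ s' hs'm t' ht'm
  have hlip : |s' - t'| ≤ |s - t| := le_trans (max_lip a _ _) (min_lip b s t)
  have hclose : |s - t| ≤ |s' - t'| + 2 := by
    have e1 : |s - t| ≤ |s - s'| + |s' - t| := abs_sub_le _ _ _
    have e2 : |s' - t| ≤ |s' - t'| + |t' - t| := abs_sub_le _ _ _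
    have e3 : |t' - t| = |t - t'| := abs_sub_comm _ _
    linarith
  have tri1 : dist ((fun s => if s < a then p else if b < s then q else φ s) s)
      ((fun s => if s < a then p else if b < s then q else φ s) t)
      ≤ dist (φ s') (φ t') + 2*B := by
    have := dist_triangle4 ((fun s => if s < a then p else if b < s then q else φ s) s)
      (φ s') (φ t') ((fun s => if s < a then p else if b < s then q else φ s) t)
    have hc : dist (φ t') ((fun s => if s < a then p else if b < s then q else φ s) t)
        = dist ((fun s => if s < a then p else if b < s then q else φ s) t) (φ t') :=
      dist_comm _ _
    linarith [this, hc ▸ hdt]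
  have tri2 : dist (φ s') (φ t')
      ≤ dist ((fun s => if s < a then p else if b < s then q else φ s) s)
        ((fun s => if s < a then p else if b < s then q else φ s) t) + 2*B := by
    have := dist_triangle4 (φ s')
      ((fun s => if s < a then p else if b < s then q else φ s) s)
      ((fun s => if s < a then p else if b < s then q else φ s) t) (φ t')
    have hc : dist (φ s') ((fun s => if s < a then p else if b < s then q else φ s) s)
        = dist ((fun s => if s < a then p else if b < s then q else φ s) s) (φ s') :=
      dist_comm _ _
    linarith [this, hc ▸ hds]
  constructor
  · have d1 : |s - t| / K ≤ (|s' - t'| + 2) / K := (div_le_div_iff_of_pos_right hK0).mpr hclose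
    have d2 : (|s' - t'| + 2) / K = |s' - t'| / K + 2 / K := add_div _ _ _
    have d3 : 2 / K ≤ 2 := div_le_self (by norm_num) hK
    linarith [hqg.1, tri2]
  · have d4 : K * |s' - t'| ≤ K * |s - t| := mul_le_mul_of_nonneg_left hlip hK0.le
    linarith [hqg.2, tri1]

private lemma geo_subseg {X : Type*} [MetricSpace X] {γ : ℝ → X} {D : ℝ}
    (hγ : ∀ s ∈ Icc (0:ℝ) D, ∀ t ∈ Icc (0:ℝ) D, dist (γ s) (γ t) = |s - t|)
    {s₀ s₁ : ℝ} (h₀ : s₀ ∈ Icc (0:ℝ) D) (h₁ : s₁ ∈ Icc (0:ℝ) D) :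
    ∃ c : ℝ → X,
      (∀ t ∈ Icc (0:ℝ) |s₁ - s₀|, ∀ t' ∈ Icc (0:ℝ) |s₁ - s₀|,
        dist (c t) (c t') = |t - t'|) ∧
      c 0 = γ s₀ ∧ c |s₁ - s₀| = γ s₁ ∧
      ∀ t ∈ Icc (0:ℝ) |s₁ - s₀|, c t ∈ γ '' Icc 0 D := by
  rcases le_total s₀ s₁ with h | h
  · have habs : |s₁ - s₀| = s₁ - s₀ := abs_of_nonneg (by linarith)
    have hm : ∀ u ∈ Icc (0:ℝ) |s₁ - s₀|, s₀ + u ∈ Icc (0:ℝ) D := by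
      intro u hu
      rw [habs] at hu
      exact ⟨by linarith [h₀.1, hu.1], by linarith [h₁.2, hu.2]⟩
    refine ⟨fun t => γ (s₀ + t), ?_, by simp, ?_, ?_⟩
    · intro t ht t' ht'
      rw [hγ _ (hm t ht) _ (hm t' ht')]
      congr 1
      ring
    · rw [habs]
      congr 1
      ring
    · intro t ht
      exact ⟨s₀ + t, hm t ht, rfl⟩
  · have habs : |s₁ - s₀| = s₀ - s₁ := by
      rw [abs_sub_comm]; exact abs_of_nonneg (by linarith)
    have hm : ∀ u ∈ Icc (0:ℝ) |s₁ - s₀|, s₀ - u ∈ Icc (0:ℝ) D := by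
      intro u hu
      rw [habs] at hu
      exact ⟨by linarith [h₁.1, hu.2], by linarith [h₀.2, hu.1]⟩
    refine ⟨fun t => γ (s₀ - t), ?_, by simp, ?_, ?_⟩
    · intro t ht t' ht'
      rw [hγ _ (hm t ht) _ (hm t' ht')]
      have : s₀ - t - (s₀ - t') = -(t - t') := by ring
      rw [this, abs_neg]
    · rw [habs]
      congr 1
      ring
    · intro t ht
      exact ⟨s₀ - t, hm t ht, rfl⟩

private lemma coarse_onto {X : Type*} [MetricSpace X] {K C M D a b : ℝ}
    {γ σ : ℝ → X} (hK : 1 ≤ K) (hC : 0 ≤ C) (hM : 0 ≤ M) (hD : 0 ≤ D) (hab : a ≤ b)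
    (hγ : ∀ s ∈ Icc (0:ℝ) D, ∀ t ∈ Icc (0:ℝ) D, dist (γ s) (γ t) = |s - t|)
    (hσ : ∀ s ∈ Icc a b, ∀ t ∈ Icc a b, dist (σ s) (σ t) ≤ K * |s - t| + C)
    (hnear : ∀ s ∈ Icc a b, ∃ u, u ∈ Icc (0:ℝ) D ∧ dist (σ s) (γ u) ≤ M)
    (ha : σ a = γ 0) (hb : σ b = γ D) :
    ∀ u ∈ Icc (0:ℝ) D, ∃ s ∈ Icc a b, dist (γ u) (σ s) ≤ 4*M + K + C := by
  classical
  intro u hu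
  choose U hU1 hU2 using hnear
  have h0D : (0:ℝ) ∈ Icc (0:ℝ) D := ⟨le_refl _, hD⟩
  have hDD : D ∈ Icc (0:ℝ) D := ⟨hD, le_refl _⟩
  set sf : ℕ → ℝ := fun j => min (a + j) b with hsf
  have hsfm : ∀ j, sf j ∈ Icc a b := fun j =>
    ⟨le_min (le_add_of_nonneg_right (Nat.cast_nonneg j)) hab, min_le_right _ _⟩
  set w : ℕ → ℝ := fun j => U (sf j) (hsfm j) with hw
  have hwm : ∀ j, w j ∈ Icc (0:ℝ) D := fun j => hU1 _ _
  have hwd : ∀ j, dist (σ (sf j)) (γ (w j)) ≤ M := fun j => hU2 _ _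
  set n := ⌈b - a⌉₊ with hn
  have hsf0 : sf 0 = a := by
    simp only [hsf, Nat.cast_zero, add_zero]
    exact min_eq_left hab
  have hsfn : sf n = b := min_eq_right (by linarith [Nat.le_ceil (b - a)])
  have hw0 : w 0 ≤ M := by
    have h := hwd 0
    rw [hsf0, ha, hγ 0 h0D _ (hwm 0)] at h
    have := le_abs_self (w 0 - 0)
    rw [abs_sub_comm] at h
    linarith
  have hwn : D - M ≤ w n := by
    have h := hwd n
    rw [hsfn, hb, hγ D hDD _ (hwm n)] at h
    have := le_abs_self (D - w n)
    linarith
  have hstep : ∀ j : ℕ, |w (j+1) - w j| ≤ 2*M + K + C := by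
    intro j
    have hd : dist (γ (w (j+1))) (γ (w j)) = |w (j+1) - w j| := hγ _ (hwm _) _ (hwm _)
    have hsd : |sf (j+1) - sf j| ≤ 1 := by
      have h := min_lip b (a + (j+1 : ℕ)) (a + (j : ℕ))
      have he : (a + ((j:ℕ)+1 : ℕ) : ℝ) - (a + (j:ℕ)) = 1 := by push_cast; ring
      rw [he] at h
      simpa [hsf] using h
    have hσd : dist (σ (sf (j+1))) (σ (sf j)) ≤ K * 1 + C := by
      refine le_trans (hσ _ (hsfm _) _ (hsfm _)) ?_
      have := mul_le_mul_of_nonneg_left hsd (by linarith : (0:ℝ) ≤ K)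
      linarith
    have tri := dist_triangle4 (γ (w (j+1))) (σ (sf (j+1))) (σ (sf j)) (γ (w j))
    have hc : dist (γ (w (j+1))) (σ (sf (j+1))) = dist (σ (sf (j+1))) (γ (w (j+1))) :=
      dist_comm _ _
    rw [← hd]
    calc dist (γ (w (j+1))) (γ (w j))
        ≤ dist (γ (w (j+1))) (σ (sf (j+1))) + dist (σ (sf (j+1))) (σ (sf j))
          + dist (σ (sf j)) (γ (w j)) := tri
      _ ≤ M + (K * 1 + C) + M := by
          rw [hc]
          exact add_le_add (add_le_add (hwd _) hσd) (hwd _)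
      _ = 2*M + K + C := by ring
  set T := 3*M + K + C with hT
  have hP : ∃ j, u - T ≤ w j := ⟨n, by linarith [hwn, hu.2]⟩
  set j := Nat.find hP with hjdef
  have hj : u - T ≤ w j := Nat.find_spec hP
  have hgoal : |w j - u| ≤ T := by
    rcases Nat.eq_zero_or_pos j with h0 | hpos
    · rw [h0] at hj ⊢
      rw [abs_le]
      exact ⟨by linarith [hu.1], by linarith [hw0, hu.1]⟩
    · obtain ⟨k, hk⟩ := Nat.exists_eq_add_of_lt hpos
      have hkj : k < j := by omega
      have hknot : ¬ (u - T ≤ w k) := Nat.find_min hP hkj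
      push_neg at hknot
      have hs := hstep k
      have hjk : j = k + 1 := by omega
      rw [hjk] at hj ⊢
      rw [abs_le] at hs ⊢
      constructor
      · linarith [hs.1]
      · linarith
  refine ⟨sf j, hsfm j, ?_⟩
  have tri := dist_triangle (γ u) (γ (w j)) (σ (sf j))
  have h1 : dist (γ u) (γ (w j)) = |u - w j| := hγ _ hu _ (hwm j)
  have h2 : dist (γ (w j)) (σ (sf j)) = dist (σ (sf j)) (γ (w j)) := dist_comm _ _
  have h3 : |u - w j| ≤ T := by rw [abs_sub_comm]; exact hgoal
  have h4 := hwd j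
  rw [h1, h2] at tri
  calc dist (γ u) (σ (sf j)) ≤ |u - w j| + dist (σ (sf j)) (γ (w j)) := tri
    _ ≤ T + M := add_le_add h3 h4
    _ = 4*M + K + C := by ring


end Helpers

/-- for a quasi-isometric embedding `f` of a quasi-geodesic space
`Y` into a geodesic space `X`, Durham–Taylor stability of `Y` in `X` is
equivalent to `f(Y)` being an `N`-stable subspace of `X` for some Morse
gauge `N`. -/
theorem statement16 {Y X : Type*} [MetricSpace Y] [MetricSpace X]
    (hX : GeodesicSpace X)
    (hY : ∃ K C : ℝ, 1 ≤ K ∧ 0 ≤ C ∧ ∀ y y' : Y, ∃ (a b : ℝ) (σ : ℝ → Y),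
        a ≤ b ∧ IsQuasiGeodesicOn K C (Icc a b) σ ∧ σ a = y ∧ σ b = y')
    (f : Y → X) (hf : ∃ K C : ℝ, 1 ≤ K ∧ 0 ≤ C ∧ IsQIEmbedding K C f) :
    DTStable f ↔
      ∃ N : ℝ → ℝ → ℝ, IsMorseGauge N ∧ IsStableSubset N (Set.range f) := by
  constructor
  · -- forward: DT stability implies stable subset
    intro hDT
    obtain ⟨KY, CY, hKY, hCY, hYgeo⟩ := hY
    obtain ⟨Kf, Cf, hKf, hCf, hfqi⟩ := hf
    have hKf0 : (0:ℝ) < Kf := by linarith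
    have hK₀ : 1 ≤ KY * Kf := by nlinarith
    have hC₀ : 0 ≤ Kf * CY + Cf + CY := by positivity
    -- pushforward of quasi-geodesics of Y
    have hpush : ∀ y y' : Y, ∃ a b : ℝ, ∃ σ : ℝ → Y, a ≤ b ∧
        IsQuasiGeodesicOn (KY * Kf) (Kf * CY + Cf + CY) (Icc a b) (fun s => f (σ s)) ∧
        σ a = y ∧ σ b = y' := by
      intro y y'
      obtain ⟨a, b, σ, hab, hσ, h1, h2⟩ := hYgeo y y'
      refine ⟨a, b, σ, hab, ?_, h1, h2⟩
      intro s hs t ht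
      obtain ⟨hl, hu⟩ := hσ s hs t ht
      obtain ⟨hl', hu'⟩ := hfqi (σ s) (σ t)
      constructor
      · have d1 : (|s - t| / KY - CY) / Kf ≤ dist (σ s) (σ t) / Kf :=
          (div_le_div_iff_of_pos_right hKf0).mpr hl
        have d2 : (|s - t| / KY - CY) / Kf = |s - t| / (KY * Kf) - CY / Kf := by
          rw [sub_div, div_div]
        have d3 : CY / Kf ≤ CY := div_le_self hCY hKf
        have d4 : 0 ≤ Kf * CY := by positivity
        simp only []
        linarith
      · have d1 : Kf * dist (σ s) (σ t) ≤ Kf * (KY * |s - t| + CY) :=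
          mul_le_mul_of_nonneg_left hu hKf0.le
        simp only []
        nlinarith
    obtain ⟨B, hB0, hBspec⟩ := hDT (KY * Kf) (Kf * CY + Cf + CY) hK₀ hC₀
    -- quasi-convexity of range f with constant B
    have qconv : ∀ x ∈ Set.range f, ∀ y ∈ Set.range f, ∀ γ : ℝ → X,
        IsGeodesicFromTo γ x y → ∀ s ∈ Icc (0:ℝ) (dist x y),
        ∃ g ∈ Set.range f, dist (γ s) g ≤ B := by
      rintro x ⟨yx, rfl⟩ y ⟨yy, rfl⟩ γ hγ s hs
      obtain ⟨a, b, σ, hab, hσ, h1, h2⟩ := hpush yx yy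
      have hq2 : IsQuasiGeodesicOn (KY * Kf) (Kf * CY + Cf + CY)
          (Icc 0 (dist (f yx) (f yy))) γ := geodesic_qg hK₀ hC₀ hγ.1.2
      have H := hBspec a b 0 (dist (f yx) (f yy)) hab dist_nonneg
        (fun s => f (σ s)) γ hσ hq2
        (by show f (σ a) = γ 0; rw [h1, hγ.2.1]) (by show f (σ b) = γ (dist (f yx) (f yy)); rw [h2, hγ.2.2]) ⟨σ a, rfl⟩ ⟨σ b, rfl⟩
      obtain ⟨t, _, hd⟩ := H.2 s hs
      exact ⟨f (σ t), ⟨σ t, rfl⟩, by rw [dist_comm]; exact hd⟩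
    -- the key Morse bound
    have key : ∀ K C : ℝ, 1 ≤ K → 0 ≤ C → ∃ M : ℝ, 0 ≤ M ∧
        ∀ x ∈ Set.range f, ∀ y ∈ Set.range f, ∀ γ : ℝ → X,
        IsGeodesicFromTo γ x y → ∀ a b : ℝ, a ≤ b → ∀ τ : ℝ → X,
        IsQuasiGeodesicOn K C (Icc a b) τ →
        τ a ∈ γ '' Icc 0 (dist x y) → τ b ∈ γ '' Icc 0 (dist x y) →
        ∀ s ∈ Icc a b, ∃ g ∈ γ '' Icc 0 (dist x y), dist (τ s) g ≤ M := by
      intro K C hK hC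
      obtain ⟨R, hR0, hRspec⟩ := hDT K (C + 2*B + 2) hK (by linarith)
      refine ⟨R + B, by linarith, ?_⟩
      intro x hx y hy γ hγ a b hab τ hτ hτa hτb s hs
      obtain ⟨s₀, hs₀, he₀⟩ := hτa
      obtain ⟨s₁, hs₁, he₁⟩ := hτb
      obtain ⟨p₀, hp₀f, hp₀d⟩ := qconv x hx y hy γ hγ s₀ hs₀
      obtain ⟨p₁, hp₁f, hp₁d⟩ := qconv x hx y hy γ hγ s₁ hs₁
      obtain ⟨c, hcgeo, hc0, hcL, hcmem⟩ := geo_subseg hγ.1.2 hs₀ hs₁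
      set L := |s₁ - s₀| with hLdef
      have hL0 : 0 ≤ L := abs_nonneg _
      have hq1 := ext_qg hK hB0 hab hτ
        (by rw [← he₀, dist_comm]; exact hp₀d) (by rw [← he₁, dist_comm]; exact hp₁d)
      have hq2 := ext_qg hK hB0 hL0 (geodesic_qg hK hC hcgeo)
        (by rw [hc0, dist_comm]; exact hp₀d) (by rw [hcL, dist_comm]; exact hp₁d)
      have hend1 : (fun u => if u < a then p₀ else if b < u then p₁ else τ u) (a - 1)
          = (fun u => if u < 0 then p₀ else if L < u then p₁ else c u) (0 - 1) := by
        simp only []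
        rw [if_pos (by linarith : a - 1 < a), if_pos (by norm_num : (0:ℝ) - 1 < 0)]
      have hend2 : (fun u => if u < a then p₀ else if b < u then p₁ else τ u) (b + 1)
          = (fun u => if u < 0 then p₀ else if L < u then p₁ else c u) (L + 1) := by
        simp only []
        rw [if_neg (by linarith : ¬ (b + 1 < a)), if_pos (by linarith : b < b + 1),
          if_neg (by linarith : ¬ (L + 1 < 0)), if_pos (by linarith : L < L + 1)]
      have hmem1 : (fun u => if u < a then p₀ else if b < u then p₁ else τ u) (a - 1)
          ∈ Set.range f := by
        simp only []
        rw [if_pos (by linarith : a - 1 < a)]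
        exact hp₀f
      have hmem2 : (fun u => if u < a then p₀ else if b < u then p₁ else τ u) (b + 1)
          ∈ Set.range f := by
        simp only []
        rw [if_neg (by linarith : ¬ (b + 1 < a)), if_pos (by linarith : b < b + 1)]
        exact hp₁f
      have H := hRspec (a - 1) (b + 1) (0 - 1) (L + 1) (by linarith) (by linarith)
        _ _ hq1 hq2 hend1 hend2 hmem1 hmem2
      obtain ⟨t, ht, hd⟩ := H.1 s ⟨by linarith [hs.1], by linarith [hs.2]⟩
      rw [if_neg (not_lt.2 hs.1), if_neg (not_lt.2 hs.2)] at hd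
      by_cases ht0 : t < 0
      · rw [if_pos ht0] at hd
        refine ⟨γ s₀, ⟨s₀, hs₀, rfl⟩, ?_⟩
        have tri := dist_triangle (τ s) p₀ (γ s₀)
        have hh := hp₀d
        rw [dist_comm] at hh
        linarith
      · by_cases htL : L < t
        · rw [if_neg ht0, if_pos htL] at hd
          refine ⟨γ s₁, ⟨s₁, hs₁, rfl⟩, ?_⟩
          have tri := dist_triangle (τ s) p₁ (γ s₁)
          have hh := hp₁d
          rw [dist_comm] at hh
          linarith
        · rw [if_neg ht0, if_neg htL] at hd
          exact ⟨c t, hcmem t ⟨not_lt.1 ht0, not_lt.1 htL⟩, by linarith⟩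
    refine ⟨fun K C => if h : 1 ≤ K ∧ 0 ≤ C then (key K C h.1 h.2).choose else 0,
      ?_, ⟨B, hB0, qconv⟩, ?_⟩
    · intro K C hK hC
      show 0 ≤ if h : 1 ≤ K ∧ 0 ≤ C then (key K C h.1 h.2).choose else 0
      rw [dif_pos (⟨hK, hC⟩ : 1 ≤ K ∧ 0 ≤ C)]
      exact (key K C hK hC).choose_spec.1
    · rintro x hx y hy
      obtain ⟨γ, hγ⟩ := hX x y
      refine ⟨γ, hγ, ?_⟩
      intro K C hK hC a b hab τ hτ hτa hτb s hs
      show ∃ g ∈ γ '' Icc 0 (dist x y), dist (τ s) g ≤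
        if h : 1 ≤ K ∧ 0 ≤ C then (key K C h.1 h.2).choose else 0
      rw [dif_pos (⟨hK, hC⟩ : 1 ≤ K ∧ 0 ≤ C)]
      exact (key K C hK hC).choose_spec.2 x hx y hy γ hγ a b hab τ hτ hτa hτb s hs
  · -- backward: stable subset implies DT stability
    rintro ⟨N, hN, ⟨_, hjoin⟩⟩ K C hK hC
    have hM0 : 0 ≤ N K C := hN K C hK hC
    refine ⟨5 * N K C + K + C, by linarith, ?_⟩
    intro a₁ b₁ a₂ b₂ h1 h2 σ₁ σ₂ hq1 hq2 hea heb hrx hry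
    obtain ⟨γ, hγ, hMorse⟩ := hjoin (σ₁ a₁) hrx (σ₁ b₁) hry
    set D := dist (σ₁ a₁) (σ₁ b₁) with hD
    have hD0 : 0 ≤ D := dist_nonneg
    have hxG : σ₁ a₁ ∈ γ '' Icc 0 D := ⟨0, ⟨le_refl _, hD0⟩, hγ.2.1⟩
    have hyG : σ₁ b₁ ∈ γ '' Icc 0 D := ⟨D, ⟨hD0, le_refl _⟩, hγ.2.2⟩
    have H1 := hMorse K C hK hC a₁ b₁ h1 σ₁ hq1 hxG hyG
    have H2 := hMorse K C hK hC a₂ b₂ h2 σ₂ hq2 (hea ▸ hxG) (heb ▸ hyG)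
    have hnear1 : ∀ s ∈ Icc a₁ b₁, ∃ u, u ∈ Icc (0:ℝ) D ∧ dist (σ₁ s) (γ u) ≤ N K C := by
      intro s hs
      obtain ⟨g, ⟨u, hu, rfl⟩, hd⟩ := H1 s hs
      exact ⟨u, hu, hd⟩
    have hnear2 : ∀ t ∈ Icc a₂ b₂, ∃ u, u ∈ Icc (0:ℝ) D ∧ dist (σ₂ t) (γ u) ≤ N K C := by
      intro t ht
      obtain ⟨g, ⟨u, hu, rfl⟩, hd⟩ := H2 t ht
      exact ⟨u, hu, hd⟩
    have honto1 := coarse_onto hK hC hM0 hD0 h1 hγ.1.2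
      (fun s hs t ht => (hq1 s hs t ht).2) hnear1 hγ.2.1.symm hγ.2.2.symm
    have honto2 := coarse_onto hK hC hM0 hD0 h2 hγ.1.2
      (fun s hs t ht => (hq2 s hs t ht).2) hnear2
      (hea.symm.trans hγ.2.1.symm) (heb.symm.trans hγ.2.2.symm)
    constructor
    · intro s hs
      obtain ⟨u, hu, hd1⟩ := hnear1 s hs
      obtain ⟨t, ht, hd2⟩ := honto2 u hu
      refine ⟨t, ht, ?_⟩
      have tri := dist_triangle (σ₁ s) (γ u) (σ₂ t)
      have hc : dist (γ u) (σ₂ t) ≤ 4 * N K C + K + C := hd2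
      linarith
    · intro t ht
      obtain ⟨u, hu, hd1⟩ := hnear2 t ht
      obtain ⟨s, hs, hd2⟩ := honto1 u hu
      refine ⟨s, hs, ?_⟩
      have tri := dist_triangle (σ₁ s) (γ u) (σ₂ t)
      have hc1 : dist (γ u) (σ₂ t) = dist (σ₂ t) (γ u) := dist_comm _ _
      have hc2 : dist (σ₁ s) (γ u) = dist (γ u) (σ₁ s) := dist_comm _ _
      linarith [hd1, hd2, hc1 ▸ tri]
end

section
/- Given a Morse gauge N and constants K ≥ 1, C ≥ 0, there exist a constant A = A(N,K,C) and a Morse gauge N' = N'(N,K,C) such that the following holds. Let X and Y be geodesic metric spaces, let q : X → Y be a (K,C)-quasi-isometry, let e ∈ X, and let x, y, z ∈ X^(N)_e. Then q(x), q(y), q(z) ∈ Y^(N')_{q(e)} and |(x·y)_e − (x·z)_e|/K − A ≤ |(q(x)·q(y))_{q(e)} − (q(x)·q(z))_{q(e)}| ≤ K·|(x·y)_e − (x·z)_e| + A. -/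
open Set Filter

section Helpers

variable {X : Type*} [MetricSpace X]

lemma geo_dist_eq {γ : ℝ → X} {a b : X} (h : IsGeodesicFromTo γ a b)
    {s t : ℝ} (hs : s ∈ Icc 0 (dist a b)) (ht : t ∈ Icc 0 (dist a b)) :
    dist (γ s) (γ t) = |s - t| := h.1.2 s hs t ht

lemma geo_dist_left {γ : ℝ → X} {a b : X} (h : IsGeodesicFromTo γ a b)
    {t : ℝ} (ht : t ∈ Icc 0 (dist a b)) : dist a (γ t) = t := by
  have h0 : (0:ℝ) ∈ Icc 0 (dist a b) := ⟨le_refl _, dist_nonneg⟩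
  have := geo_dist_eq h h0 ht
  rw [h.2.1] at this
  rw [this, abs_sub_comm, sub_zero, abs_of_nonneg ht.1]

lemma geo_dist_right {γ : ℝ → X} {a b : X} (h : IsGeodesicFromTo γ a b)
    {t : ℝ} (ht : t ∈ Icc 0 (dist a b)) : dist (γ t) b = dist a b - t := by
  have hL : dist a b ∈ Icc 0 (dist a b) := ⟨dist_nonneg, le_refl _⟩
  have := geo_dist_eq h ht hL
  rw [h.2.2] at this
  rw [this, abs_of_nonpos (by linarith [ht.2])]
  ring

lemma gprod_nonneg {e x y : X} : 0 ≤ gprod e x y := by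
  have := dist_triangle x e y
  rw [dist_comm x e] at this
  unfold gprod; linarith

lemma gprod_le_left {e x y : X} : gprod e x y ≤ dist e x := by
  have := dist_triangle e x y
  unfold gprod; linarith

lemma gprod_le_right {e x y : X} : gprod e x y ≤ dist e y := by
  have := dist_triangle e y x
  rw [dist_comm y x] at this
  unfold gprod; linarith

/-- P1 : every point of a geodesic from `x` to `y` is at distance ≥ (x·y)_e from e. -/
lemma gprod_le_dist_geo {e x y : X} {η : ℝ → X} (hη : IsGeodesicFromTo η x y)
    {c : ℝ} (hc : c ∈ Icc 0 (dist x y)) : gprod e x y ≤ dist e (η c) := by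
  have h1 : dist e x ≤ dist e (η c) + c := by
    have := dist_triangle e (η c) x
    rw [dist_comm (η c) x] at this
    rw [geo_dist_left hη hc] at this
    exact this
  have h2 : dist e y ≤ dist e (η c) + (dist x y - c) := by
    have := dist_triangle e (η c) y
    rw [geo_dist_right hη hc] at this
    linarith
  unfold gprod; linarith

/-- P2 : divergence lower bound for two geodesics from e. -/
lemma pair_lower {e x y : X} {γ β : ℝ → X}
    (hγ : IsGeodesicFromTo γ e x) (hβ : IsGeodesicFromTo β e y)
    {u v : ℝ} (hu : u ∈ Icc 0 (dist e x)) (hv : v ∈ Icc 0 (dist e y)) :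
    u + v - 2 * gprod e x y ≤ dist (γ u) (β v) := by
  have h1 : dist x y ≤ dist x (γ u) + dist (γ u) (β v) + dist (β v) y := by
    calc dist x y ≤ dist x (γ u) + dist (γ u) y := dist_triangle _ _ _
    _ ≤ dist x (γ u) + (dist (γ u) (β v) + dist (β v) y) := by
        linarith [dist_triangle (γ u) (β v) y]
    _ = _ := by ring
  rw [dist_comm x (γ u), geo_dist_right hγ hu, geo_dist_right hβ hv] at h1
  unfold gprod; linarith

/-- P3 : distance between two points on geodesics from `e`. -/
lemma pair_param {e x y : X} {γ β : ℝ → X}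
    (hγ : IsGeodesicFromTo γ e x) (hβ : IsGeodesicFromTo β e y)
    {u v : ℝ} (hu : u ∈ Icc 0 (dist e x)) (hv : v ∈ Icc 0 (dist e y)) :
    |u - v| ≤ dist (γ u) (β v) := by
  have := abs_dist_sub_le (γ u) (β v) e
  rw [dist_comm (γ u) e, dist_comm (β v) e, geo_dist_left hγ hu, geo_dist_left hβ hv] at this
  exact this

end Helpers
section Helpers2

variable {X Y : Type*} [MetricSpace X] [MetricSpace Y]

lemma qg_weaken {K C K' C' : ℝ} {I : Set ℝ} {σ : ℝ → X}
    (h : IsQuasiGeodesicOn K C I σ) (hK : 0 < K) (hKK : K ≤ K') (hCC : C ≤ C') :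
    IsQuasiGeodesicOn K' C' I σ := by
  intro s hs t ht
  obtain ⟨h1, h2⟩ := h s hs t ht
  have hK' : 0 < K' := lt_of_lt_of_le hK hKK
  constructor
  · have : |s - t| / K' ≤ |s - t| / K :=
      div_le_div_of_nonneg_left (abs_nonneg _) hK hKK
    linarith
  · nlinarith [abs_nonneg (s - t)]

lemma qg_perturb {K C ε : ℝ} {I : Set ℝ} {σ σ' : ℝ → X}
    (h : IsQuasiGeodesicOn K C I σ) (_hε : 0 ≤ ε)
    (hd : ∀ s ∈ I, dist (σ' s) (σ s) ≤ ε) :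
    IsQuasiGeodesicOn K (C + 2 * ε) I σ' := by
  intro s hs t ht
  obtain ⟨h1, h2⟩ := h s hs t ht
  have d1 := hd s hs
  have d2 := hd t ht
  have t1 : dist (σ' s) (σ' t) ≤ dist (σ s) (σ t) + 2 * ε := by
    calc dist (σ' s) (σ' t) ≤ dist (σ' s) (σ s) + dist (σ s) (σ' t) := dist_triangle _ _ _
    _ ≤ ε + (dist (σ s) (σ t) + dist (σ t) (σ' t)) := by
        have := dist_triangle (σ s) (σ t) (σ' t); linarith
    _ ≤ dist (σ s) (σ t) + 2 * ε := by rw [dist_comm (σ t) (σ' t)]; linarith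
  have t2 : dist (σ s) (σ t) ≤ dist (σ' s) (σ' t) + 2 * ε := by
    calc dist (σ s) (σ t) ≤ dist (σ s) (σ' s) + dist (σ' s) (σ t) := dist_triangle _ _ _
    _ ≤ ε + (dist (σ' s) (σ' t) + dist (σ' t) (σ t)) := by
        have := dist_triangle (σ' s) (σ' t) (σ t)
        rw [dist_comm (σ s) (σ' s)]; linarith
    _ ≤ dist (σ' s) (σ' t) + 2 * ε := by linarith
  exact ⟨by linarith, by linarith⟩

lemma qg_reverse {K C ℓ : ℝ} {σ : ℝ → X}
    (h : IsQuasiGeodesicOn K C (Icc 0 ℓ) σ) :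
    IsQuasiGeodesicOn K C (Icc 0 ℓ) (fun s => σ (ℓ - s)) := by
  intro s hs t ht
  have hs' : ℓ - s ∈ Icc 0 ℓ := ⟨by linarith [hs.2], by linarith [hs.1]⟩
  have ht' : ℓ - t ∈ Icc 0 ℓ := ⟨by linarith [ht.2], by linarith [ht.1]⟩
  have := h _ hs' _ ht'
  have habs : |ℓ - s - (ℓ - t)| = |s - t| := by
    rw [show ℓ - s - (ℓ - t) = -(s - t) by ring, abs_neg]
  rwa [habs] at this

/-- geodesics are (K,C)-quasi-geodesics for K ≥ 1, C ≥ 0. -/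
lemma qg_of_geodesic {a b : X} {γ : ℝ → X} (h : IsGeodesicFromTo γ a b)
    {K C : ℝ} (hK : 1 ≤ K) (hC : 0 ≤ C) :
    IsQuasiGeodesicOn K C (Icc 0 (dist a b)) γ := by
  intro s hs t ht
  rw [geo_dist_eq h hs ht]
  constructor
  · have h1 : |s - t| / K ≤ |s - t| / 1 := by
      apply div_le_div_of_nonneg_left (abs_nonneg _) one_pos hK
    simp at h1; linarith
  · nlinarith [abs_nonneg (s - t)]

/-- composition of a quasi-geodesic with a quasi-isometric-type map. -/
lemma qg_comp {K C Kq Cq : ℝ} {I : Set ℝ} {σ : ℝ → X} {f : X → Y}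
    (h : IsQuasiGeodesicOn K C I σ) (hK : 1 ≤ K) (hC : 0 ≤ C)
    (hKq : 1 ≤ Kq) (hCq : 0 ≤ Cq)
    (hfU : ∀ a b : X, dist (f a) (f b) ≤ Kq * dist a b + Cq)
    (hfL : ∀ a b : X, dist a b / Kq - Cq ≤ dist (f a) (f b)) :
    IsQuasiGeodesicOn (Kq * K) (Kq * C + Cq + C + Cq) I (fun s => f (σ s)) := by
  intro s hs t ht
  obtain ⟨h1, h2⟩ := h s hs t ht
  have hKq0 : (0:ℝ) < Kq := by linarith
  have hK0 : (0:ℝ) < K := by linarith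
  constructor
  · have l1 := hfL (σ s) (σ t)
    have l2 : (|s - t| / K - C) / Kq ≤ dist (σ s) (σ t) / Kq :=
      (div_le_div_iff_of_pos_right hKq0).mpr h1
    rw [sub_div, div_div] at l2
    rw [mul_comm K Kq] at l2
    have l3 : C / Kq ≤ C := by
      rw [div_le_iff₀ hKq0]; nlinarith
    have l4 : (0:ℝ) ≤ Kq * C := by positivity
    linarith
  · have u1 := hfU (σ s) (σ t)
    nlinarith [abs_nonneg (s - t)]

/-- Coarse intermediate value theorem. -/
lemma coarse_ivt {ψ : ℝ → ℝ} {a b J t : ℝ} (hab : a ≤ b) (hJ : 0 ≤ J)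
    (hstep : ∀ s ∈ Icc a b, ∀ s' ∈ Icc a b, |s - s'| ≤ 1 → |ψ s - ψ s'| ≤ J)
    (h1 : ψ a ≤ t) (h2 : t ≤ ψ b) : ∃ s ∈ Icc a b, |ψ s - t| ≤ J := by
  set S := {s | s ∈ Icc a b ∧ ψ s ≤ t} with hS
  have haS : a ∈ S := ⟨⟨le_refl _, hab⟩, h1⟩
  have hbdd : BddAbove S := ⟨b, fun s hs => hs.1.2⟩
  set s₀ := sSup S with hs₀
  have hs₀a : a ≤ s₀ := le_csSup hbdd haS
  have hs₀b : s₀ ≤ b := csSup_le ⟨a, haS⟩ (fun s hs => hs.1.2)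
  obtain ⟨s₁, hs₁S, hs₁⟩ : ∃ s₁ ∈ S, s₀ - 1/2 < s₁ := by
    by_contra hcon
    push_neg at hcon
    have : s₀ ≤ s₀ - 1/2 := csSup_le ⟨a, haS⟩ hcon
    linarith
  have hs₁b : s₁ ≤ s₀ := le_csSup hbdd hs₁S
  set s₂ := min (s₀ + 1/2) b with hs₂
  have hs₂m : s₂ ∈ Icc a b := ⟨le_min (by linarith) hab, min_le_right _ _⟩
  by_cases hc : ψ s₂ ≤ t
  · have hs₂S : s₂ ∈ S := ⟨hs₂m, hc⟩
    have : s₂ ≤ s₀ := le_csSup hbdd hs₂S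
    have hbs : b ≤ s₀ := by
      rcases le_or_gt (s₀ + 1/2) b with hh | hh
      · have : s₂ = s₀ + 1/2 := min_eq_left hh
        linarith
      · linarith [min_le_left (s₀ + 1/2) b, min_le_right (s₀+1/2) b,
          (min_eq_right hh.le : s₂ = b)]
    have hsb : s₀ = b := le_antisymm hs₀b hbs
    refine ⟨b, ⟨hab, le_refl _⟩, ?_⟩
    have hψb : ψ b ≤ t := by
      have : s₂ = b := by rw [hs₂, hsb]; exact min_eq_right (by linarith)
      rwa [this] at hc
    have : ψ b = t := le_antisymm hψb h2
    rw [this]; simpa using hJ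
  · push_neg at hc
    refine ⟨s₁, hs₁S.1, ?_⟩
    have hd : |s₁ - s₂| ≤ 1 := by
      rw [abs_le]
      constructor
      · have : s₂ ≤ s₀ + 1/2 := min_le_left _ _
        linarith
      · have : s₀ ≤ s₂ + 1/2 := by
          rcases le_or_gt (s₀ + 1/2) b with hh | hh
          · rw [hs₂, min_eq_left hh]; linarith
          · rw [hs₂, min_eq_right hh.le]; linarith
        linarith [hs₁S.1.2, hs₂m.2]
    have := hstep s₁ hs₁S.1 s₂ hs₂m hd
    have h₁t : ψ s₁ ≤ t := hs₁S.2
    rw [abs_le] at this ⊢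
    constructor <;> linarith [this.1, this.2]
  
end Helpers2
section Helpers3

variable {X : Type*} [MetricSpace X]

/-- The surgery lemma: cutting a quasi-geodesic at a near-minimum of the distance
to `e` and appending a geodesic to `e` yields a quasi-geodesic. -/
lemma surgery (hXg : GeodesicSpace X) {K₁ C₁ ℓ : ℝ}
    (hK₁ : 1 ≤ K₁) (hC₁ : 0 ≤ C₁) {τ : ℝ → X}
    (hτ : IsQuasiGeodesicOn K₁ C₁ (Icc 0 ℓ) τ) (e : X) {cs : ℝ}
    (hcs : cs ∈ Icc 0 ℓ)
    (hmin : ∀ c ∈ Icc 0 cs, dist e (τ cs) ≤ dist e (τ c) + 1) :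
    ∃ V : ℝ → X, ∃ ℓV : ℝ, cs ≤ ℓV ∧
      IsQuasiGeodesicOn (4*K₁) (C₁+1) (Icc 0 ℓV) V ∧
      (∀ c ∈ Icc 0 cs, V c = τ c) ∧ V 0 = τ 0 ∧ V ℓV = e := by
  obtain ⟨g, hg⟩ := hXg (τ cs) e
  set R := dist (τ cs) e with hRdef
  have hR0 : 0 ≤ R := dist_nonneg
  have hK₁0 : (0:ℝ) < K₁ := by linarith
  refine ⟨fun s => if s ≤ cs then τ s else g (s - cs), cs + R, by linarith, ?_, ?_, ?_, ?_⟩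
  · -- quasi-geodesic property
    have key : ∀ s ∈ Icc (0:ℝ) (cs + R), ∀ t ∈ Icc (0:ℝ) (cs + R), s ≤ t →
        |s - t| / (4*K₁) - (C₁+1) ≤
          dist ((fun s => if s ≤ cs then τ s else g (s - cs)) s)
               ((fun s => if s ≤ cs then τ s else g (s - cs)) t) ∧
        dist ((fun s => if s ≤ cs then τ s else g (s - cs)) s)
             ((fun s => if s ≤ cs then τ s else g (s - cs)) t) ≤ 4*K₁ * |s - t| + (C₁+1) := by
      intro s hs t ht hst
      have habs : |s - t| = t - s := by rw [abs_sub_comm]; exact abs_of_nonneg (by linarith)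
      by_cases h1 : t ≤ cs
      · -- both on τ
        have hs1 : s ≤ cs := le_trans hst h1
        simp only [if_pos hs1, if_pos h1]
        have hsI : s ∈ Icc 0 ℓ := ⟨hs.1, by linarith [hcs.2]⟩
        have htI : t ∈ Icc 0 ℓ := ⟨ht.1, by linarith [hcs.2]⟩
        obtain ⟨l, u⟩ := hτ s hsI t htI
        constructor
        · have : |s - t| / (4*K₁) ≤ |s - t| / K₁ :=
            div_le_div_of_nonneg_left (abs_nonneg _) hK₁0 (by linarith)
          linarith
        · nlinarith [abs_nonneg (s - t)]
      · push_neg at h1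
        by_cases h2 : s ≤ cs
        · -- cross case
          simp only [if_pos h2, if_neg (not_le.mpr h1)]
          obtain ⟨u, hu⟩ : ∃ u : ℝ, u = cs - s := ⟨_, rfl⟩
          obtain ⟨r, hr⟩ : ∃ r : ℝ, r = t - cs := ⟨_, rfl⟩
          have hu0 : 0 ≤ u := by rw [hu]; linarith
          have hr0 : 0 ≤ r := by rw [hr]; linarith
          have hscs : s ∈ Icc 0 cs := ⟨hs.1, h2⟩
          have hsI : s ∈ Icc 0 ℓ := ⟨hs.1, by linarith [hcs.2]⟩
          have hcsI : cs ∈ Icc 0 ℓ := hcs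
          have hrR : t - cs ∈ Icc 0 R := ⟨by linarith, by linarith [ht.2]⟩
          have hge : dist (g (t - cs)) e = R - r := by
            have := geo_dist_right hg hrR
            rw [hRdef, hr]; exact this
          have hgc : dist (τ cs) (g (t - cs)) = r := by
            rw [hr]; exact geo_dist_left hg hrR
          have hts : |s - t| = u + r := by rw [habs, hu, hr]; ring
          obtain ⟨lτ, uτ⟩ := hτ s hsI cs hcsI
          have hucs : |s - cs| = u := by
            rw [abs_sub_comm, hu]
            exact abs_of_nonneg (by linarith)
          rw [hucs] at lτ uτ
          have lower1 : r - 1 ≤ dist (τ s) (g (t - cs)) := by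
            have habsd := abs_dist_sub_le (τ s) (g (t - cs)) e
            have hms := hmin s hscs
            rw [abs_le] at habsd
            rw [hge] at habsd
            have hRe : dist e (τ cs) = R := by rw [hRdef, dist_comm]
            rw [hRe] at hms
            rw [dist_comm e (τ s)] at hms
            linarith [habsd.1, habsd.2]
          have lower2 : u / K₁ - C₁ - r ≤ dist (τ s) (g (t - cs)) := by
            have := dist_triangle (τ s) (g (t - cs)) (τ cs)
            rw [dist_comm (g (t - cs)) (τ cs), hgc] at this
            linarith
          have upper : dist (τ s) (g (t - cs)) ≤ K₁ * u + C₁ + r := by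
            have := dist_triangle (τ s) (τ cs) (g (t - cs))
            rw [hgc] at this
            linarith
          rw [hts]
          constructor
          · rcases le_or_gt ((u + r) / (4*K₁)) r with hcase | hcase
            · linarith
            · have hclear : r * (4*K₁) < u + r := by
                rw [lt_div_iff₀ (by linarith : (0:ℝ) < 4*K₁)] at hcase
                linarith
              have goal2 : (u + r) / (4*K₁) ≤ u / K₁ - r + 1 := by
                rw [div_le_iff₀ (by linarith : (0:ℝ) < 4*K₁)]
                have e2 : u / K₁ * K₁ = u := by field_simp
                have h3u : r * (8*K₁ - 4) ≥ 0 := by nlinarith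
                nlinarith [mul_pos hK₁0 hK₁0]
              linarith
          · nlinarith
        · -- both on g
          push_neg at h2
          simp only [if_neg (not_le.mpr h1), if_neg (not_le.mpr h2)]
          have h1R : s - cs ∈ Icc 0 R := ⟨by linarith [h2.le], by linarith [hs.2]⟩
          have h2R : t - cs ∈ Icc 0 R := ⟨by linarith [h1.le], by linarith [ht.2]⟩
          rw [geo_dist_eq hg h1R h2R]
          have : |s - cs - (t - cs)| = |s - t| := by ring_nf
          rw [this]
          constructor
          · have d1 : |s - t| / (4*K₁) ≤ |s - t| := by
              rw [div_le_iff₀ (by linarith : (0:ℝ) < 4*K₁)]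
              nlinarith [abs_nonneg (s - t)]
            linarith
          · nlinarith [abs_nonneg (s - t)]
    intro s hs t ht
    rcases le_total s t with hst | hst
    · exact key s hs t ht hst
    · obtain ⟨l, u⟩ := key t ht s hs hst
      rw [dist_comm] at l u
      rw [abs_sub_comm] at l u
      exact ⟨l, u⟩
  · intro c hc
    simp only [if_pos hc.2]
  · simp only [if_pos hcs.1]
  · rcases eq_or_lt_of_le hR0 with hReq | hRlt
    · have : cs + R ≤ cs := by linarith
      simp only [if_pos this]
      have : dist (τ cs) e = 0 := by rw [← hRdef, ← hReq]
      have he : τ cs = e := by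
        rwa [dist_eq_zero] at this
      rw [← he]
      congr 1
      linarith
    · have : ¬ (cs + R ≤ cs) := by linarith
      simp only [if_neg this]
      have : cs + R - cs = R := by ring
      rw [this, hg.2.2]

end Helpers3
section Helpers4

variable {X : Type*} [MetricSpace X]

/-- CORE: a quasi-geodesic from `x` to `y` admits a "switch point" close to both
Morse geodesics `[e,x]` and `[e,y]`, before which it is close to `[e,x]`,
and which nearly minimises the distance to `e`. -/
lemma core_switch (hXg : GeodesicSpace X) {N : ℝ → ℝ → ℝ} {e x y : X} {γ β : ℝ → X}
    (hγ : IsMorseGeodesicFromTo N γ e x) (hβ : IsMorseGeodesicFromTo N β e y)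
    {K₁ C₁ ℓ : ℝ} (hK₁ : 1 ≤ K₁) (hC₁ : 0 ≤ C₁) (hℓ : 0 ≤ ℓ) {τ : ℝ → X}
    (hτ : IsQuasiGeodesicOn K₁ C₁ (Icc 0 ℓ) τ) (hτ0 : τ 0 = x) (hτℓ : τ ℓ = y) :
    ∃ cs ∈ Icc 0 ℓ, ∃ us ∈ Icc 0 (dist e x), ∃ vs ∈ Icc 0 (dist e y),
      dist (τ cs) (γ us) ≤ N (4*K₁) (C₁+1) ∧ dist (τ cs) (β vs) ≤ N (4*K₁) (C₁+1) ∧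
      (∀ c ∈ Icc 0 cs, ∃ u2 ∈ Icc 0 (dist e x), dist (τ c) (γ u2) ≤ N (4*K₁) (C₁+1)) ∧
      (∀ c ∈ Icc 0 ℓ, dist e (τ cs) ≤ dist e (τ c) + 1) := by
  set S := (fun c => dist e (τ c)) '' Icc 0 ℓ with hS
  have hSne : S.Nonempty := ⟨dist e (τ 0), ⟨0, ⟨le_refl _, hℓ⟩, rfl⟩⟩
  have hSbdd : BddBelow S := ⟨0, by rintro a ⟨c, _, rfl⟩; exact dist_nonneg⟩
  obtain ⟨a, ⟨cs, hcsI, hcsa⟩, ha⟩ := exists_lt_of_csInf_lt hSne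
    (show sInf S < sInf S + 1 by linarith)
  have hmin : ∀ c ∈ Icc 0 ℓ, dist e (τ cs) ≤ dist e (τ c) + 1 := by
    intro c hc
    have h1 : sInf S ≤ dist e (τ c) := csInf_le hSbdd ⟨c, hc, rfl⟩
    have hcsa' : dist e (τ cs) = a := hcsa
    linarith
  -- forward surgery, endpoints on γ
  obtain ⟨V₁, ℓV₁, hcsV₁, hV₁qg, hV₁eq, hV₁0, hV₁ℓ⟩ :=
    surgery hXg hK₁ hC₁ hτ e hcsI (fun c hc => hmin c ⟨hc.1, le_trans hc.2 hcsI.2⟩)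
  have hℓV₁0 : (0:ℝ) ≤ ℓV₁ := le_trans hcsI.1 hcsV₁
  have hLx : (0:ℝ) ≤ dist e x := dist_nonneg
  have hxmem : x ∈ γ '' Icc 0 (dist e x) := ⟨dist e x, ⟨hLx, le_refl _⟩, hγ.1.2.2⟩
  have hemem : e ∈ γ '' Icc 0 (dist e x) := ⟨0, ⟨le_refl _, hLx⟩, hγ.1.2.1⟩
  have hcover : ∀ c ∈ Icc 0 cs, ∃ u2 ∈ Icc 0 (dist e x),
      dist (τ c) (γ u2) ≤ N (4*K₁) (C₁+1) := by
    intro c hc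
    have hcV : c ∈ Icc 0 ℓV₁ := ⟨hc.1, le_trans hc.2 hcsV₁⟩
    obtain ⟨g, ⟨u2, hu2, rfl⟩, hgd⟩ := hγ.2 (4*K₁) (C₁+1) (by linarith) (by linarith)
      0 ℓV₁ hℓV₁0 V₁ hV₁qg (by rw [hV₁0, hτ0]; exact hxmem) (by rw [hV₁ℓ]; exact hemem)
      c hcV
    rw [hV₁eq c hc] at hgd
    exact ⟨u2, hu2, hgd⟩
  obtain ⟨us, husI, hus⟩ := hcover cs ⟨hcsI.1, le_refl _⟩
  -- reversed surgery, endpoints on β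
  have hτ' : IsQuasiGeodesicOn K₁ C₁ (Icc 0 ℓ) (fun s => τ (ℓ - s)) := qg_reverse hτ
  have hcs'I : ℓ - cs ∈ Icc 0 ℓ := ⟨by linarith [hcsI.2], by linarith [hcsI.1]⟩
  have hmin' : ∀ c ∈ Icc 0 (ℓ - cs),
      dist e ((fun s => τ (ℓ - s)) (ℓ - cs)) ≤ dist e ((fun s => τ (ℓ - s)) c) + 1 := by
    intro c hc
    have : ℓ - c ∈ Icc 0 ℓ := ⟨by linarith [hc.2, hcsI.1], by linarith [hc.1]⟩
    have h2 := hmin (ℓ - c) this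
    show dist e (τ (ℓ - (ℓ - cs))) ≤ dist e (τ (ℓ - c)) + 1
    rw [show ℓ - (ℓ - cs) = cs by ring]
    exact h2
  obtain ⟨V₂, ℓV₂, hcsV₂, hV₂qg, hV₂eq, hV₂0, hV₂ℓ⟩ :=
    surgery hXg hK₁ hC₁ hτ' e hcs'I hmin'
  have hℓV₂0 : (0:ℝ) ≤ ℓV₂ := le_trans hcs'I.1 hcsV₂
  have hLy : (0:ℝ) ≤ dist e y := dist_nonneg
  have hymem : y ∈ β '' Icc 0 (dist e y) := ⟨dist e y, ⟨hLy, le_refl _⟩, hβ.1.2.2⟩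
  have hemem' : e ∈ β '' Icc 0 (dist e y) := ⟨0, ⟨le_refl _, hLy⟩, hβ.1.2.1⟩
  obtain ⟨g, ⟨vs, hvs, rfl⟩, hgd⟩ := hβ.2 (4*K₁) (C₁+1) (by linarith) (by linarith)
    0 ℓV₂ hℓV₂0 V₂ hV₂qg
    (by rw [hV₂0]; show τ (ℓ - 0) ∈ _; rw [sub_zero, hτℓ]; exact hymem)
    (by rw [hV₂ℓ]; exact hemem')
    (ℓ - cs) ⟨hcs'I.1, hcsV₂⟩
  have heq : V₂ (ℓ - cs) = τ cs := by
    rw [hV₂eq (ℓ - cs) ⟨hcs'I.1, le_refl _⟩]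
    show τ (ℓ - (ℓ - cs)) = τ cs
    rw [show ℓ - (ℓ - cs) = cs by ring]
  rw [heq] at hgd
  exact ⟨cs, hcsI, us, husI, vs, hvs, hus, hgd, hcover, hmin⟩

end Helpers4
section Helpers5

/-- Constants for the main theorem, depending only on `N, K, C`. -/
noncomputable def cCA (K C : ℝ) : ℝ := 10*(K*C)
noncomputable def cNu0 (N : ℝ → ℝ → ℝ) (K C : ℝ) : ℝ := N K (cCA K C)
noncomputable def cJ (K C : ℝ) : ℝ := K + cCA K C
noncomputable def cH (N : ℝ → ℝ → ℝ) (K C : ℝ) : ℝ :=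
  K * (cJ K C + 2 * cNu0 N K C) + 2*C
noncomputable def cNu1 (N : ℝ → ℝ → ℝ) (K C : ℝ) : ℝ := N (4*K) (cCA K C + 1)
noncomputable def cW (N : ℝ → ℝ → ℝ) (K C : ℝ) : ℝ := 3 * cNu1 N K C + cJ K C
noncomputable def cNu (N : ℝ → ℝ → ℝ) : ℝ := N 4 1
noncomputable def cE (N : ℝ → ℝ → ℝ) (K C : ℝ) : ℝ :=
  (cH N K C + K * cW N K C + 2*C) +
    ((2*cH N K C + 2*K*cNu N + C) + 3*K*cNu N + C + 2*cH N K C)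
noncomputable def cA (N : ℝ → ℝ → ℝ) (K C : ℝ) : ℝ := C + 2*cH N K C + 2*cE N K C
noncomputable def cM3 (N : ℝ → ℝ → ℝ) (K C : ℝ) : ℝ := K * cH N K C + 5*(K*C)
noncomputable def cNp (N : ℝ → ℝ → ℝ) (K C : ℝ) : ℝ → ℝ → ℝ := fun K₂ C₂ =>
  K * N (K*K₂) (K*C₂ + C₂ + 6*(K*C) + 2 * cM3 N K C) + 2*C + cH N K C

variable {X Y : Type*} [MetricSpace X] [MetricSpace Y]

/-- The thinness pair: points on two Morse geodesics from `e`, close to each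
other, with parameters close to the Gromov product. -/
lemma xpair (hXg : GeodesicSpace X) {N : ℝ → ℝ → ℝ} (hN : IsMorseGauge N)
    {e x y : X} {γ β : ℝ → X}
    (hγ : IsMorseGeodesicFromTo N γ e x) (hβ : IsMorseGeodesicFromTo N β e y) :
    ∃ us ∈ Icc 0 (dist e x), ∃ vs ∈ Icc 0 (dist e y),
      dist (γ us) (β vs) ≤ 2 * cNu N ∧
      |us - gprod e x y| ≤ 3 * cNu N ∧ |vs - gprod e x y| ≤ 3 * cNu N := by
  obtain ⟨η, hη⟩ := hXg x y
  have hν : 0 ≤ cNu N := hN 4 1 (by norm_num) (by norm_num)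
  obtain ⟨cs, hcs, us, hus, vs, hvs, h1, h2, _, _⟩ :=
    core_switch hXg hγ hβ (le_refl (1:ℝ)) (le_refl (0:ℝ)) dist_nonneg
      (qg_of_geodesic hη (le_refl _) (le_refl _)) hη.2.1 hη.2.2
  have hν1 : N (4*1) (0+1) = cNu N := by norm_num [cNu]
  rw [hν1] at h1 h2
  set p := gprod e x y with hp
  have hp1 : p ≤ dist e (η cs) := gprod_le_dist_geo hη hcs
  have hgu : dist e (γ us) = us := geo_dist_left hγ.1 hus
  have hgv : dist e (β vs) = vs := geo_dist_left hβ.1 hvs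
  have hus_low : p - cNu N ≤ us := by
    have h3 := dist_triangle e (γ us) (η cs)
    rw [dist_comm (γ us) (η cs), hgu] at h3
    linarith
  have hvs_low : p - cNu N ≤ vs := by
    have h3 := dist_triangle e (β vs) (η cs)
    rw [dist_comm (β vs) (η cs), hgv] at h3
    linarith
  have hd : dist (γ us) (β vs) ≤ 2 * cNu N := by
    have := dist_triangle (γ us) (η cs) (β vs)
    rw [dist_comm (γ us) (η cs)] at this
    linarith
  have hsum := pair_lower hγ.1 hβ.1 hus hvs
  refine ⟨us, hus, vs, hvs, hd, ?_, ?_⟩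
  · rw [abs_le]; constructor <;> linarith
  · rw [abs_le]; constructor <;> linarith

/-- Package of quasi-isometry data together with a quasi-inverse. -/
structure QIPair (K C : ℝ) {X Y : Type*} [MetricSpace X] [MetricSpace Y]
    (q : X → Y) (qb : Y → X) : Prop where
  hK : 1 ≤ K
  hC : 0 ≤ C
  qU : ∀ a b : X, dist (q a) (q b) ≤ K * dist a b + C
  qL : ∀ a b : X, dist a b / K - C ≤ dist (q a) (q b)
  qbU : ∀ a b : Y, dist (qb a) (qb b) ≤ K * dist a b + 3*(K*C)
  qbL : ∀ a b : Y, dist a b / K - 3*(K*C) ≤ dist (qb a) (qb b)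
  qqb : ∀ a : Y, dist a (q (qb a)) ≤ C
  qbq : ∀ a : X, dist a (qb (q a)) ≤ 2*(K*C)

lemma qipair_exists {K C : ℝ} (hK : 1 ≤ K) (hC : 0 ≤ C)
    {X Y : Type*} [MetricSpace X] [MetricSpace Y] {q : X → Y}
    (hq : IsQuasiIsometry K C q) : ∃ qb : Y → X, QIPair K C q qb := by
  have hK0 : (0:ℝ) < K := by linarith
  choose qb hqb using hq.2
  refine ⟨qb, hK, hC, fun a b => (hq.1 a b).2, fun a b => (hq.1 a b).1, ?_, ?_, hqb, ?_⟩
  · intro a b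
    have h1 := (hq.1 (qb a) (qb b)).1
    have h2 := dist_triangle (q (qb a)) a (q (qb b))
    have h3 := dist_triangle a b (q (qb b))
    have h4 := hqb a
    have h5 := hqb b
    rw [dist_comm (q (qb a)) a] at h2
    have : dist (qb a) (qb b) / K - C ≤ dist a b + 2*C := by linarith
    have h6 : dist (qb a) (qb b) ≤ K * (dist a b + 3*C) := by
      rw [div_sub' (ne_of_gt hK0), div_le_iff₀ hK0] at this
      nlinarith
    nlinarith
  · intro a b
    have h1 := (hq.1 (qb a) (qb b)).2
    have h2 := dist_triangle a (q (qb a)) b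
    have h3 := dist_triangle (q (qb a)) (q (qb b)) b
    have h4 := hqb a
    have h5 := hqb b
    rw [dist_comm (q (qb b)) b] at h3
    have h6 : dist a b ≤ K * dist (qb a) (qb b) + 3*C := by linarith
    rw [sub_le_iff_le_add, div_le_iff₀ hK0]
    have hKK : (1:ℝ) ≤ K*K := by nlinarith
    have h9 : 3*C ≤ 3*(K*K)*C := by nlinarith
    nlinarith
  · intro a
    have h1 := (hq.1 a (qb (q a))).1
    have h2 := hqb (q a)
    have : dist a (qb (q a)) / K - C ≤ C := by linarith
    rw [div_sub' (ne_of_gt hK0), div_le_iff₀ hK0] at this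
    nlinarith

end Helpers5
section Helpers6

variable {X Y : Type*} [MetricSpace X] [MetricSpace Y]

/-- Pull back a geodesic of `Y` to a quasi-geodesic of `X` with matched endpoints. -/
noncomputable def pullMap (qb : Y → X) (α' : ℝ → Y) (a b : X) (ℓ' : ℝ) : ℝ → X :=
  fun s => if s ≤ 0 then a else if ℓ' ≤ s then b else qb (α' s)

lemma pull {K C : ℝ} {q : X → Y} {qb : Y → X} (hP : QIPair K C q qb)
    {a b : X} {α' : ℝ → Y} (hα' : IsGeodesicFromTo α' (q a) (q b)) :
    IsQuasiGeodesicOn K (cCA K C) (Icc 0 (dist (q a) (q b)))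
      (pullMap qb α' a b (dist (q a) (q b))) ∧
    (∀ s ∈ Icc 0 (dist (q a) (q b)),
      dist (q (pullMap qb α' a b (dist (q a) (q b)) s)) (α' s) ≤ C) ∧
    pullMap qb α' a b (dist (q a) (q b)) 0 = a ∧
    (0 < dist (q a) (q b) →
      pullMap qb α' a b (dist (q a) (q b)) (dist (q a) (q b)) = b) := by
  have hK0 : (0:ℝ) < K := by linarith [hP.hK]
  have hKC0 : (0:ℝ) ≤ K*C := mul_nonneg (by linarith [hP.hK]) hP.hC
  set ℓ' := dist (q a) (q b) with hℓ'
  have hℓ'0 : 0 ≤ ℓ' := dist_nonneg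
  have hbase : IsQuasiGeodesicOn (K*1) (K*0 + 3*(K*C) + 0 + 3*(K*C)) (Icc 0 ℓ')
      (fun s => qb (α' s)) :=
    qg_comp (qg_of_geodesic hα' (le_refl _) (le_refl _)) (le_refl _) (le_refl _)
      hP.hK (by positivity) hP.qbU hP.qbL
  have hd : ∀ s ∈ Icc 0 ℓ',
      dist (pullMap qb α' a b ℓ' s) ((fun s => qb (α' s)) s) ≤ 2*(K*C) := by
    intro s hs
    by_cases h0 : s ≤ 0
    · have hs0 : s = 0 := le_antisymm h0 hs.1
      rw [hs0]
      simp only [pullMap, if_pos (le_refl (0:ℝ))]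
      rw [hα'.2.1]
      exact hP.qbq a
    · by_cases h1 : ℓ' ≤ s
      · have hs1 : s = ℓ' := le_antisymm hs.2 h1
        rw [hs1] at h0 ⊢
        simp only [pullMap, if_neg h0, if_pos (le_refl ℓ')]
        rw [hα'.2.2]
        exact hP.qbq b
      · simp only [pullMap, if_neg h0, if_neg h1]
        rw [dist_self]
        linarith
  have hqg : IsQuasiGeodesicOn K (cCA K C) (Icc 0 ℓ') (pullMap qb α' a b ℓ') := by
    have := qg_perturb hbase (by positivity) hd
    have hKeq : K*1 = K := mul_one K
    have hCeq : K*0 + 3*(K*C) + 0 + 3*(K*C) + 2*(2*(K*C)) = cCA K C := by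
      unfold cCA; ring
    rwa [hKeq, hCeq] at this
  refine ⟨hqg, ?_, ?_, ?_⟩
  · intro s hs
    by_cases h0 : s ≤ 0
    · have hs0 : s = 0 := le_antisymm h0 hs.1
      rw [hs0]
      simp only [pullMap, if_pos (le_refl (0:ℝ))]
      rw [hα'.2.1, dist_self]
      exact hP.hC
    · by_cases h1 : ℓ' ≤ s
      · have hs1 : s = ℓ' := le_antisymm hs.2 h1
        rw [hs1] at h0 ⊢
        simp only [pullMap, if_neg h0, if_pos (le_refl ℓ')]
        rw [hα'.2.2, dist_self]
        exact hP.hC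
      · simp only [pullMap, if_neg h0, if_neg h1]
        rw [dist_comm]
        exact hP.qqb (α' s)
  · simp [pullMap]
  · intro hpos
    simp only [pullMap, if_neg (not_le.mpr hpos), if_pos (le_refl ℓ')]

/-- Two-sided Hausdorff correspondence between a Morse geodesic `[e,w]` in `X`
and a geodesic `[q e, q w]` in `Y`. -/
lemma hmach {N : ℝ → ℝ → ℝ} (hN : IsMorseGauge N) {K C : ℝ} {q : X → Y} {qb : Y → X}
    (hP : QIPair K C q qb) {e w : X} {α : ℝ → X} {α' : ℝ → Y}
    (hα : IsMorseGeodesicFromTo N α e w) (hα' : IsGeodesicFromTo α' (q e) (q w)) :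
    (∀ u ∈ Icc 0 (dist (q e) (q w)), ∃ t ∈ Icc 0 (dist e w),
        dist (α' u) (q (α t)) ≤ cH N K C) ∧
    (∀ t ∈ Icc 0 (dist e w), ∃ u ∈ Icc 0 (dist (q e) (q w)),
        dist (q (α t)) (α' u) ≤ cH N K C) := by
  have hK1 := hP.hK
  have hC0 := hP.hC
  have hK0 : (0:ℝ) < K := by linarith
  have hKC0 : (0:ℝ) ≤ K*C := by positivity
  have hCA0 : 0 ≤ cCA K C := by unfold cCA; positivity
  have hν₀ : 0 ≤ cNu0 N K C := hN K _ hK1 hCA0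
  have hJ0 : 0 ≤ cJ K C := by unfold cJ; linarith
  set ℓ' := dist (q e) (q w) with hℓ'
  have hℓ'0 : 0 ≤ ℓ' := dist_nonneg
  set L := dist e w with hL
  have hL0 : 0 ≤ L := dist_nonneg
  obtain ⟨hqg, hdC, hτ0, hτℓ⟩ := pull hP hα'
  set τ := pullMap qb α' e w ℓ' with hτdef
  have hτ0mem : τ 0 ∈ α '' Icc 0 L := by
    rw [hτ0]
    exact ⟨0, ⟨le_refl _, hL0⟩, hα.1.2.1⟩
  have hτℓmem : τ ℓ' ∈ α '' Icc 0 L := by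
    rcases eq_or_lt_of_le hℓ'0 with hdeg | hpos
    · rw [← hdeg, hτ0]
      exact ⟨0, ⟨le_refl _, hL0⟩, hα.1.2.1⟩
    · rw [hτℓ hpos]
      exact ⟨L, ⟨hL0, le_refl _⟩, hα.1.2.2⟩
  have hMorse : ∀ s ∈ Icc 0 ℓ', ∃ t ∈ Icc 0 L, dist (τ s) (α t) ≤ cNu0 N K C := by
    intro s hs
    obtain ⟨g, ⟨t, htI, rfl⟩, hg⟩ := hα.2 K (cCA K C) hK1 hCA0 0 ℓ' hℓ'0 τ hqg
      hτ0mem hτℓmem s hs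
    exact ⟨t, htI, hg⟩
  constructor
  · intro u hu
    obtain ⟨t, htI, ht⟩ := hMorse u hu
    refine ⟨t, htI, ?_⟩
    have h1 := hdC u hu
    have h2 : dist (q (τ u)) (q (α t)) ≤ K * cNu0 N K C + C := by
      have := hP.qU (τ u) (α t)
      nlinarith
    have h3 := dist_triangle (α' u) (q (τ u)) (q (α t))
    rw [dist_comm (α' u) (q (τ u))] at h3
    have hgoal : C + (K * cNu0 N K C + C) ≤ cH N K C := by
      unfold cH
      nlinarith
    linarith
  · intro t htI
    rcases eq_or_lt_of_le hℓ'0 with hdeg | hpos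
    · -- degenerate case : q e and q w coincide
      refine ⟨0, ⟨le_refl _, hℓ'0⟩, ?_⟩
      have hLK : L / K - C ≤ 0 := by
        have := hP.qL e w
        rw [← hL, ← hℓ', ← hdeg] at this
        linarith
      have hLKC : L ≤ K * C := by
        rw [div_sub' (ne_of_gt hK0), div_le_iff₀ hK0] at hLK
        nlinarith
      have h1 : dist (q (α t)) (q e) ≤ K * t + C := by
        have := hP.qU (α t) e
        rw [dist_comm (α t) e, geo_dist_left hα.1 htI] at this
        exact this
      have h2 : α' 0 = q e := hα'.2.1
      rw [h2]
      have : K * t + C ≤ cH N K C := by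
        unfold cH cJ cCA
        nlinarith [htI.2, hLKC]
      linarith
    · -- main case : use the coarse IVT
      have hψstep : ∀ s ∈ Icc 0 ℓ', ∀ s' ∈ Icc 0 ℓ', |s - s'| ≤ 1 →
          |dist e (τ s) - dist e (τ s')| ≤ cJ K C := by
        intro s hs s' hs' hss
        have h1 : |dist e (τ s) - dist e (τ s')| ≤ dist (τ s) (τ s') := by
          have := abs_dist_sub_le (τ s) (τ s') e
          rwa [dist_comm (τ s) e, dist_comm (τ s') e] at this
        have h2 := (hqg s hs s' hs').2
        have : K * |s - s'| ≤ K * 1 := by nlinarith [abs_nonneg (s - s')]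
        unfold cJ
        linarith
      have hψ0 : dist e (τ 0) = 0 := by rw [hτ0]; simp
      have hψℓ : dist e (τ ℓ') = L := by rw [hτℓ hpos]
      have hiv1 : dist e (τ 0) ≤ t := by rw [hψ0]; exact htI.1
      have hiv2 : t ≤ dist e (τ ℓ') := by rw [hψℓ]; exact htI.2
      obtain ⟨s, hsI, hs⟩ := coarse_ivt (t := t) hℓ'0 hJ0 hψstep hiv1 hiv2
      obtain ⟨t', ht'I, ht'⟩ := hMorse s hsI
      have hpar : |t' - dist e (τ s)| ≤ cNu0 N K C := by
        have h5 := abs_dist_sub_le (α t') (τ s) e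
        rw [dist_comm (α t') e, dist_comm (τ s) e, geo_dist_left hα.1 ht'I] at h5
        have h6 : dist (α t') (τ s) ≤ cNu0 N K C := by
          rw [dist_comm]; exact ht'
        exact le_trans h5 h6
      have htt' : |t - t'| ≤ cJ K C + cNu0 N K C := by
        have h7 := abs_le.mp hs
        have h8 := abs_le.mp hpar
        rw [abs_le]
        constructor <;> linarith [h7.1, h7.2, h8.1, h8.2]
      have h9 : dist (α t) (τ s) ≤ cJ K C + 2 * cNu0 N K C := by
        have h10 := dist_triangle (α t) (α t') (τ s)
        have h11 : dist (α t) (α t') = |t - t'| := geo_dist_eq hα.1 htI ht'I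
        have h6 : dist (α t') (τ s) ≤ cNu0 N K C := by
          rw [dist_comm]; exact ht'
        rw [h11] at h10
        linarith
      refine ⟨s, hsI, ?_⟩
      have h12 : dist (q (α t)) (q (τ s)) ≤ K * (cJ K C + 2*cNu0 N K C) + C := by
        have := hP.qU (α t) (τ s)
        nlinarith
      have h13 := hdC s hsI
      have h14 := dist_triangle (q (α t)) (q (τ s)) (α' s)
      have h15 : K * (cJ K C + 2*cNu0 N K C) + C + C = cH N K C := by
        unfold cH; ring
      linarith

end Helpers6
section Helpers7

lemma consts_nonneg {N : ℝ → ℝ → ℝ} (hN : IsMorseGauge N) {K C : ℝ}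
    (hK : 1 ≤ K) (hC : 0 ≤ C) :
    0 ≤ cCA K C ∧ 0 ≤ cNu0 N K C ∧ 0 ≤ cJ K C ∧ 0 ≤ cH N K C ∧
    0 ≤ cNu1 N K C ∧ 0 ≤ cW N K C ∧ 0 ≤ cNu N ∧ 0 ≤ cM3 N K C := by
  have hCA : 0 ≤ cCA K C := by unfold cCA; positivity
  have hν₀ : 0 ≤ cNu0 N K C := hN K _ hK hCA
  have hJ : 0 ≤ cJ K C := by unfold cJ; linarith
  have hH : 0 ≤ cH N K C := by unfold cH; nlinarith
  have hν₁ : 0 ≤ cNu1 N K C := hN (4*K) _ (by linarith) (by linarith)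
  have hW : 0 ≤ cW N K C := by unfold cW; linarith
  have hν : 0 ≤ cNu N := hN 4 1 (by norm_num) (by norm_num)
  have hM3 : 0 ≤ cM3 N K C := by unfold cM3; nlinarith
  exact ⟨hCA, hν₀, hJ, hH, hν₁, hW, hν, hM3⟩

lemma cNp_gauge {N : ℝ → ℝ → ℝ} (hN : IsMorseGauge N) {K C : ℝ}
    (hK : 1 ≤ K) (hC : 0 ≤ C) : IsMorseGauge (cNp N K C) := by
  intro K₂ C₂ hK₂ hC₂
  obtain ⟨hCA, hν₀, hJ, hH, hν₁, hW, hν, hM3⟩ := consts_nonneg hN hK hC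
  have h1 : 0 ≤ N (K*K₂) (K*C₂ + C₂ + 6*(K*C) + 2 * cM3 N K C) := by
    apply hN
    · nlinarith
    · nlinarith
  unfold cNp
  nlinarith

variable {X Y : Type*} [MetricSpace X] [MetricSpace Y]

/-- The image geodesic `[q e, q w]` is Morse with gauge `cNp N K C`. -/
lemma morse_prime {N : ℝ → ℝ → ℝ} (hN : IsMorseGauge N) {K C : ℝ}
    {q : X → Y} {qb : Y → X} (hP : QIPair K C q qb) {e w : X} {α : ℝ → X} {α' : ℝ → Y}
    (hα : IsMorseGeodesicFromTo N α e w) (hα' : IsGeodesicFromTo α' (q e) (q w)) :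
    IsMorseGeodesicFromTo (cNp N K C) α' (q e) (q w) := by
  have hK1 := hP.hK
  have hC0 := hP.hC
  have hK0 : (0:ℝ) < K := by linarith
  have hKC0 : (0:ℝ) ≤ K*C := by positivity
  obtain ⟨hCA, hν₀, hJ, hH, hν₁, hW, hν, hM3⟩ := consts_nonneg hN hK1 hC0
  obtain ⟨hH1, hH2⟩ := hmach hN hP hα hα'
  set ℓ' := dist (q e) (q w) with hℓ'
  have hℓ'0 : 0 ≤ ℓ' := dist_nonneg
  set L := dist e w with hL
  have hL0 : 0 ≤ L := dist_nonneg
  refine ⟨hα', ?_⟩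
  intro K₂ C₂ hK₂ hC₂ a b hab σ hσ hσa hσb s hsI
  have hNp0 : 0 ≤ cNp N K C K₂ C₂ := cNp_gauge hN hK1 hC0 K₂ C₂ hK₂ hC₂
  by_cases hsa : s = a
  · subst hsa
    exact ⟨σ s, hσa, by rw [dist_self]; exact hNp0⟩
  by_cases hsb : s = b
  · subst hsb
    exact ⟨σ s, hσb, by rw [dist_self]; exact hNp0⟩
  -- endpoints data
  obtain ⟨u₀, hu₀I, hu₀⟩ := hσa
  obtain ⟨u₁, hu₁I, hu₁⟩ := hσb
  obtain ⟨t₀, ht₀I, ht₀⟩ := hH1 u₀ hu₀I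
  obtain ⟨t₁, ht₁I, ht₁⟩ := hH1 u₁ hu₁I
  -- pulled-back quasi-geodesic with endpoints on α
  have hbase : IsQuasiGeodesicOn (K*K₂) (K*C₂ + 3*(K*C) + C₂ + 3*(K*C)) (Icc a b)
      (fun s => qb (σ s)) :=
    qg_comp hσ hK₂ hC₂ hK1 (by positivity) hP.qbU hP.qbL
  set τ : ℝ → X := fun s => if s ≤ a then α t₀ else if b ≤ s then α t₁ else qb (σ s)
    with hτdef
  have hMa : dist (α t₀) (qb (σ a)) ≤ cM3 N K C := by
    have d2' := hP.qbq (α t₀)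
    have d1' : dist (qb (q (α t₀))) (qb (σ a)) ≤ K * cH N K C + 3*(K*C) := by
      have h := hP.qbU (q (α t₀)) (σ a)
      have h2 : dist (q (α t₀)) (σ a) ≤ cH N K C := by
        rw [← hu₀, dist_comm]; exact ht₀
      nlinarith
    have htr := dist_triangle (α t₀) (qb (q (α t₀))) (qb (σ a))
    unfold cM3
    linarith
  have hMb : dist (α t₁) (qb (σ b)) ≤ cM3 N K C := by
    have d2' := hP.qbq (α t₁)
    have d1' : dist (qb (q (α t₁))) (qb (σ b)) ≤ K * cH N K C + 3*(K*C) := by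
      have h := hP.qbU (q (α t₁)) (σ b)
      have h2 : dist (q (α t₁)) (σ b) ≤ cH N K C := by
        rw [← hu₁, dist_comm]; exact ht₁
      nlinarith
    have htr := dist_triangle (α t₁) (qb (q (α t₁))) (qb (σ b))
    unfold cM3
    linarith
  have hpert : ∀ s ∈ Icc a b, dist (τ s) ((fun s => qb (σ s)) s) ≤ cM3 N K C := by
    intro s' hs'
    by_cases h0 : s' ≤ a
    · have : s' = a := le_antisymm h0 hs'.1
      rw [this]
      simp only [hτdef, if_pos (le_refl a)]
      exact hMa
    · by_cases h1 : b ≤ s'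
      · have heq : s' = b := le_antisymm hs'.2 h1
        rw [heq] at h0 ⊢
        simp only [hτdef, if_neg h0, if_pos (le_refl b)]
        exact hMb
      · simp only [hτdef, if_neg h0, if_neg h1]
        rw [dist_self]
        exact hM3
  have hτqg : IsQuasiGeodesicOn (K*K₂) (K*C₂ + C₂ + 6*(K*C) + 2*cM3 N K C) (Icc a b) τ := by
    have := qg_perturb hbase hM3 hpert
    have hCeq : K*C₂ + 3*(K*C) + C₂ + 3*(K*C) + 2*cM3 N K C
        = K*C₂ + C₂ + 6*(K*C) + 2*cM3 N K C := by ring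
    rwa [hCeq] at this
  have hτa : τ a ∈ α '' Icc 0 L := by
    simp only [hτdef, if_pos (le_refl a)]
    exact ⟨t₀, ht₀I, rfl⟩
  have hτb : τ b ∈ α '' Icc 0 L := by
    by_cases h0 : b ≤ a
    · simp only [hτdef, if_pos h0]
      exact ⟨t₀, ht₀I, rfl⟩
    · simp only [hτdef, if_neg h0, if_pos (le_refl b)]
      exact ⟨t₁, ht₁I, rfl⟩
  obtain ⟨g, ⟨t, htI, rfl⟩, hg⟩ := hα.2 (K*K₂) (K*C₂ + C₂ + 6*(K*C) + 2*cM3 N K C)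
    (by nlinarith) (by nlinarith) a b hab τ hτqg hτa hτb s hsI
  -- push forward
  have hsa' : ¬ s ≤ a := fun h => hsa (le_antisymm h hsI.1)
  have hsb' : ¬ b ≤ s := fun h => hsb (le_antisymm hsI.2 h)
  have hτs : τ s = qb (σ s) := by simp only [hτdef, if_neg hsa', if_neg hsb']
  rw [hτs] at hg
  obtain ⟨u, huI, hu⟩ := hH2 t htI
  refine ⟨α' u, ⟨u, huI, rfl⟩, ?_⟩
  have p1 : dist (σ s) (q (qb (σ s))) ≤ C := hP.qqb (σ s)
  have p2 : dist (q (qb (σ s))) (q (α t)) ≤ K * (N (K*K₂) (K*C₂ + C₂ + 6*(K*C) + 2*cM3 N K C)) + C := by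
    have := hP.qU (qb (σ s)) (α t)
    nlinarith
  have p3 := dist_triangle (σ s) (q (qb (σ s))) (q (α t))
  have p4 := dist_triangle (σ s) (q (α t)) (α' u)
  unfold cNp
  linarith

/-- The image of the branch point `γ((x·y)_e)` is close to any geodesic `[q x, q y]`. -/
lemma mvisit (hXg : GeodesicSpace X) {N : ℝ → ℝ → ℝ} (hN : IsMorseGauge N) {K C : ℝ}
    {q : X → Y} {qb : Y → X} (hP : QIPair K C q qb) {e x y : X} {γ β : ℝ → X}
    (hγ : IsMorseGeodesicFromTo N γ e x) (hβ : IsMorseGeodesicFromTo N β e y)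
    {η' : ℝ → Y} (hη' : IsGeodesicFromTo η' (q x) (q y)) :
    ∃ c ∈ Icc 0 (dist (q x) (q y)),
      dist (q (γ (gprod e x y))) (η' c) ≤ K * cW N K C + 2*C := by
  have hK1 := hP.hK
  have hC0 := hP.hC
  have hK0 : (0:ℝ) < K := by linarith
  have hKC0 : (0:ℝ) ≤ K*C := by positivity
  obtain ⟨hCA, hν₀, hJ, hH, hν₁, hW, hν, hM3⟩ := consts_nonneg hN hK1 hC0
  set p := gprod e x y with hp
  set L := dist e x with hL
  have hpI : p ∈ Icc 0 L := ⟨gprod_nonneg, gprod_le_left⟩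
  have hLp : L - p ≤ dist x y := by
    have h1 : dist e x ≤ dist e y + dist y x := dist_triangle _ _ _
    rw [dist_comm y x] at h1
    rw [hp, hL]; unfold gprod; linarith
  set ℓ'' := dist (q x) (q y) with hℓ''
  have hℓ''0 : 0 ≤ ℓ'' := dist_nonneg
  have hγp : dist (γ p) x = L - p := geo_dist_right hγ.1 hpI
  rcases eq_or_lt_of_le hℓ''0 with hdeg | hpos
  · -- degenerate case
    refine ⟨0, ⟨le_refl _, hℓ''0⟩, ?_⟩
    have hxy : dist x y ≤ K * C := by
      have h1 := hP.qL x y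
      rw [← hℓ'', ← hdeg] at h1
      have h2 : dist x y / K ≤ C := by linarith
      rw [div_le_iff₀ hK0] at h2
      nlinarith
    rw [hη'.2.1]
    have h3 : dist (q (γ p)) (q x) ≤ K * (L - p) + C := by
      have := hP.qU (γ p) x
      nlinarith [hγp]
    have h4 : K * (L - p) + C ≤ K * cW N K C + 2*C := by
      unfold cW cJ cCA
      nlinarith [hLp, hxy]
    linarith
  · -- main case
    obtain ⟨hqg, hdC, hτ0, hτℓ⟩ := pull hP hη'
    set τ := pullMap qb η' x y ℓ'' with hτdef
    obtain ⟨cs, hcsI, us, husI, vs, hvsI, h1, h2, hcover, hmin⟩ :=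
      core_switch hXg hγ hβ hK1 hCA hℓ''0 hqg hτ0 (hτℓ hpos)
    have hν₁eq : N (4*K) (cCA K C + 1) = cNu1 N K C := rfl
    rw [hν₁eq] at h1 h2
    have hsum := pair_lower hγ.1 hβ.1 husI hvsI
    have hdus : dist (γ us) (β vs) ≤ 2 * cNu1 N K C := by
      have := dist_triangle (γ us) (τ cs) (β vs)
      rw [dist_comm (γ us) (τ cs)] at this
      linarith
    have hgu : dist e (γ us) = us := geo_dist_left hγ.1 husI
    have hgv : dist e (β vs) = vs := geo_dist_left hβ.1 hvsI
    have husub : us ≤ p + 2 * cNu1 N K C := by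
      have hpar := pair_param hγ.1 hβ.1 husI hvsI
      have := abs_le.mp hpar
      rw [← hp] at hsum
      linarith [this.1, this.2]
    have hfinish : ∀ c ∈ Icc 0 ℓ'', dist (γ p) (τ c) ≤ cW N K C →
        ∃ c' ∈ Icc 0 ℓ'', dist (q (γ p)) (η' c') ≤ K * cW N K C + 2*C := by
      intro c hc hclose
      refine ⟨c, hc, ?_⟩
      have q1 : dist (q (γ p)) (q (τ c)) ≤ K * cW N K C + C := by
        have := hP.qU (γ p) (τ c)
        nlinarith
      have q2 := hdC c hc
      have := dist_triangle (q (γ p)) (q (τ c)) (η' c)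
      linarith
    rcases le_or_gt p us with hcase | hcase
    · -- the switch point is above p
      apply hfinish cs hcsI
      have h3 : dist (γ p) (γ us) = us - p := by
        rw [geo_dist_eq hγ.1 hpI husI, abs_sub_comm]
        exact abs_of_nonneg (by linarith)
      have := dist_triangle (γ p) (γ us) (τ cs)
      rw [dist_comm (γ us) (τ cs)] at this
      unfold cW
      linarith [h3 ▸ this]
    · rcases le_or_gt L (p + cNu1 N K C) with hcase2 | hcase2
      · -- x itself is close to γ p
        apply hfinish 0 ⟨le_refl _, hℓ''0⟩
        rw [hτ0]
        have : dist (γ p) x = L - p := hγp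
        unfold cW cJ
        linarith
      · -- coarse IVT down from x
        set ψ : ℝ → ℝ := fun s => dist e (τ (cs - s)) with hψdef
        have hψstep : ∀ s ∈ Icc 0 cs, ∀ s' ∈ Icc 0 cs, |s - s'| ≤ 1 →
            |ψ s - ψ s'| ≤ cJ K C := by
          intro s hs s' hs' hss
          have hm1 : cs - s ∈ Icc 0 ℓ'' := ⟨by linarith [hs.2], by linarith [hs.1, hcsI.2]⟩
          have hm2 : cs - s' ∈ Icc 0 ℓ'' := ⟨by linarith [hs'.2], by linarith [hs'.1, hcsI.2]⟩
          have ha : |ψ s - ψ s'| ≤ dist (τ (cs - s)) (τ (cs - s')) := by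
            have := abs_dist_sub_le (τ (cs - s)) (τ (cs - s')) e
            rwa [dist_comm (τ (cs - s)) e, dist_comm (τ (cs - s')) e] at this
          have hb := (hqg (cs - s) hm1 (cs - s') hm2).2
          have habs2 : |cs - s - (cs - s')| = |s - s'| := by
            rw [show cs - s - (cs - s') = -(s - s') by ring, abs_neg]
          rw [habs2] at hb
          have : K * |s - s'| ≤ K * 1 := by nlinarith [abs_nonneg (s - s')]
          unfold cJ
          linarith
        have hiv1 : ψ 0 ≤ p + cNu1 N K C := by
          show dist e (τ (cs - 0)) ≤ p + cNu1 N K C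
          rw [sub_zero]
          have := dist_triangle e (γ us) (τ cs)
          rw [dist_comm (γ us) (τ cs), hgu] at this
          linarith
        have hiv2 : p + cNu1 N K C ≤ ψ cs := by
          show p + cNu1 N K C ≤ dist e (τ (cs - cs))
          rw [sub_self, hτ0]
          rw [← hL]
          linarith
        obtain ⟨s₁, hs₁I, hs₁⟩ := coarse_ivt (t := p + cNu1 N K C) hcsI.1 hJ hψstep hiv1 hiv2
        set c₁ := cs - s₁ with hc₁
        have hc₁I : c₁ ∈ Icc 0 cs := ⟨by linarith [hs₁I.2], by linarith [hs₁I.1]⟩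
        obtain ⟨u2, hu2I, hu2⟩ := hcover c₁ hc₁I
        rw [hν₁eq] at hu2
        apply hfinish c₁ ⟨hc₁I.1, le_trans hc₁I.2 hcsI.2⟩
        have hppar : |u2 - ψ s₁| ≤ cNu1 N K C := by
          have h5 := abs_dist_sub_le (γ u2) (τ c₁) e
          rw [dist_comm (γ u2) e, dist_comm (τ c₁) e, geo_dist_left hγ.1 hu2I] at h5
          have h6 : dist (γ u2) (τ c₁) ≤ cNu1 N K C := by rw [dist_comm]; exact hu2
          exact le_trans h5 h6
        have hup : |u2 - p| ≤ cJ K C + 2 * cNu1 N K C := by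
          have h7 := abs_le.mp hs₁
          have h8 := abs_le.mp hppar
          rw [abs_le]
          constructor <;> linarith [h7.1, h7.2, h8.1, h8.2]
        have h9 : dist (γ p) (γ u2) = |p - u2| := geo_dist_eq hγ.1 hpI hu2I
        have h10 := dist_triangle (γ p) (γ u2) (τ c₁)
        rw [h9] at h10
        have h11 : |p - u2| ≤ cJ K C + 2 * cNu1 N K C := by rwa [abs_sub_comm]
        have hu2' : dist (γ u2) (τ c₁) ≤ cNu1 N K C := by
          rw [dist_comm]; exact hu2
        unfold cW
        linarith
    
end Helpers7
section Helpers8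

variable {X Y : Type*} [MetricSpace X] [MetricSpace Y]

/-- Key estimate: the Gromov product in `Y` is close to the position of the
image of the branch point along the image geodesic. -/
lemma key_est (hXg : GeodesicSpace X) (hYg : GeodesicSpace Y)
    {N : ℝ → ℝ → ℝ} (hN : IsMorseGauge N) {K C : ℝ}
    {q : X → Y} {qb : Y → X} (hP : QIPair K C q qb) {e x y : X}
    {γ β : ℝ → X} {γ' : ℝ → Y}
    (hγ : IsMorseGeodesicFromTo N γ e x) (hβ : IsMorseGeodesicFromTo N β e y)
    (hγ' : IsGeodesicFromTo γ' (q e) (q x))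
    {uy : ℝ} (huyI : uy ∈ Icc 0 (dist (q e) (q x)))
    (huy : dist (q (γ (gprod e x y))) (γ' uy) ≤ cH N K C) :
    |gprod (q e) (q x) (q y) - uy| ≤ cE N K C := by
  have hK1 := hP.hK
  have hC0 := hP.hC
  have hK0 : (0:ℝ) < K := by linarith
  obtain ⟨hCA, hν₀, hJ, hH, hν₁, hW, hν, hM3⟩ := consts_nonneg hN hK1 hC0
  set p := gprod e x y with hp
  set p' := gprod (q e) (q x) (q y) with hp'
  -- upper bound : p' ≤ uy + (cH + K cW + 2C)
  obtain ⟨η', hη'⟩ := hYg (q x) (q y)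
  obtain ⟨c, hcI, hc⟩ := mvisit hXg hN hP hγ hβ hη'
  have hup : p' ≤ uy + (cH N K C + K * cW N K C + 2*C) := by
    have e1 : p' ≤ dist (q e) (η' c) := gprod_le_dist_geo hη' hcI
    have e2 : dist (q e) (γ' uy) = uy := geo_dist_left hγ' huyI
    have e3 := dist_triangle (q e) (γ' uy) (q (γ p))
    have e4 := dist_triangle (q e) (q (γ p)) (η' c)
    rw [dist_comm (γ' uy) (q (γ p))] at e3
    linarith
  -- lower bound : uy ≤ p' + (2H + 2Kν + C) + (2H + 3Kν + C)
  obtain ⟨β', hβ'⟩ := hYg (q e) (q y)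
  obtain ⟨us, husI, vs, hvsI, hpair, hus3, hvs3⟩ := xpair hXg hN hγ hβ
  obtain ⟨a₁, ha₁I, ha₁⟩ := (hmach hN hP hγ hγ').2 us husI
  obtain ⟨b₁, hb₁I, hb₁⟩ := (hmach hN hP hβ hβ').2 vs hvsI
  have hqd : dist (q (γ us)) (q (β vs)) ≤ K * (2 * cNu N) + C := by
    have := hP.qU (γ us) (β vs)
    nlinarith
  have hD0 : dist (γ' a₁) (β' b₁) ≤ 2*cH N K C + 2*K*cNu N + C := by
    have t1 := dist_triangle (γ' a₁) (q (γ us)) (q (β vs))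
    have t2 := dist_triangle (γ' a₁) (q (β vs)) (β' b₁)
    rw [dist_comm (γ' a₁) (q (γ us))] at t1
    linarith
  have hPL := pair_lower hγ' hβ' ha₁I hb₁I
  have hPP := pair_param hγ' hβ' ha₁I hb₁I
  have ha₁ub : a₁ ≤ p' + (2*cH N K C + 2*K*cNu N + C) := by
    have h5 := abs_le.mp hPP
    linarith [h5.1, h5.2]
  have hqpu : dist (q (γ p)) (q (γ us)) ≤ 3*K*cNu N + C := by
    have h6 := hP.qU (γ p) (γ us)
    have h7 : dist (γ p) (γ us) = |p - us| :=
      geo_dist_eq hγ.1 ⟨gprod_nonneg, gprod_le_left⟩ husI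
    have h8 : |p - us| ≤ 3 * cNu N := by rwa [abs_sub_comm]
    nlinarith
  have huya : |uy - a₁| ≤ 2*cH N K C + 3*K*cNu N + C := by
    have h9 : dist (γ' uy) (γ' a₁) = |uy - a₁| := geo_dist_eq hγ' huyI ha₁I
    have t3 := dist_triangle (γ' uy) (q (γ p)) (q (γ us))
    have t4 := dist_triangle (γ' uy) (q (γ us)) (γ' a₁)
    rw [dist_comm (γ' uy) (q (γ p))] at t3
    rw [← h9]
    linarith
  have hlow : uy ≤ p' + ((2*cH N K C + 2*K*cNu N + C) + 3*K*cNu N + C + 2*cH N K C) := by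
    have h10 := abs_le.mp huya
    linarith [h10.1, h10.2]
  have hKν : 0 ≤ K * cNu N := by positivity
  rw [abs_le]
  unfold cE
  constructor <;> nlinarith

end Helpers8

/-- quasi-isometries quasi-preserve differences of Gromov products
between points of a stratum, with constants depending only on `N, K, C`. -/
theorem statement17 (N : ℝ → ℝ → ℝ) (hN : IsMorseGauge N)
    (K C : ℝ) (hK : 1 ≤ K) (hC : 0 ≤ C) :
    ∃ A : ℝ, ∃ N' : ℝ → ℝ → ℝ, IsMorseGauge N' ∧
      ∀ (X Y : Type*) [MetricSpace X] [MetricSpace Y],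
        GeodesicSpace X → GeodesicSpace Y →
        ∀ q : X → Y, IsQuasiIsometry K C q → ∀ e : X,
          ∀ x ∈ morseStratum N e, ∀ y ∈ morseStratum N e,
            ∀ z ∈ morseStratum N e,
            q x ∈ morseStratum N' (q e) ∧ q y ∈ morseStratum N' (q e) ∧
            q z ∈ morseStratum N' (q e) ∧
            |gprod e x y - gprod e x z| / K - A ≤
              |gprod (q e) (q x) (q y) - gprod (q e) (q x) (q z)| ∧
            |gprod (q e) (q x) (q y) - gprod (q e) (q x) (q z)| ≤
              K * |gprod e x y - gprod e x z| + A := by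
  refine ⟨cA N K C, cNp N K C, cNp_gauge hN hK hC, ?_⟩
  intro X Y _ _ hXg hYg q hq e x hx y hy z hz
  have hK0 : (0:ℝ) < K := by linarith
  obtain ⟨qb, hP⟩ := qipair_exists hK hC hq
  obtain ⟨hCA, hν₀, hJ, hH, hν₁, hW, hν, hM3⟩ := consts_nonneg hN hK hC
  obtain ⟨γ, hγ⟩ := hx
  obtain ⟨β, hβ⟩ := hy
  obtain ⟨δ, hδ⟩ := hz
  obtain ⟨γ', hγ'⟩ := hYg (q e) (q x)
  obtain ⟨β', hβ'⟩ := hYg (q e) (q y)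
  obtain ⟨δ', hδ'⟩ := hYg (q e) (q z)
  refine ⟨⟨γ', morse_prime hN hP hγ hγ'⟩, ⟨β', morse_prime hN hP hβ hβ'⟩,
    ⟨δ', morse_prime hN hP hδ hδ'⟩, ?_⟩
  set p := gprod e x y with hp
  set r := gprod e x z with hr
  set p' := gprod (q e) (q x) (q y) with hp'
  set r' := gprod (q e) (q x) (q z) with hr'
  have hpI : p ∈ Icc 0 (dist e x) := ⟨gprod_nonneg, gprod_le_left⟩
  have hrI : r ∈ Icc 0 (dist e x) := ⟨gprod_nonneg, gprod_le_left⟩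
  obtain ⟨uy, huyI, huy⟩ := (hmach hN hP hγ hγ').2 p hpI
  obtain ⟨uz, huzI, huz⟩ := (hmach hN hP hγ hγ').2 r hrI
  have hkey_y : |p' - uy| ≤ cE N K C := key_est hXg hYg hN hP hγ hβ hγ' huyI huy
  have hkey_z : |r' - uz| ≤ cE N K C := key_est hXg hYg hN hP hγ hδ hγ' huzI huz
  have hdist_eq : dist (γ' uy) (γ' uz) = |uy - uz| := geo_dist_eq hγ' huyI huzI
  have hpr : dist (γ p) (γ r) = |p - r| := geo_dist_eq hγ.1 hpI hrI
  have hqU := hP.qU (γ p) (γ r)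
  have hqL := hP.qL (γ p) (γ r)
  rw [hpr] at hqU hqL
  have hupper : |uy - uz| ≤ K * |p - r| + C + 2 * cH N K C := by
    have t1 := dist_triangle (γ' uy) (q (γ p)) (q (γ r))
    have t2 := dist_triangle (γ' uy) (q (γ r)) (γ' uz)
    rw [dist_comm (γ' uy) (q (γ p))] at t1
    rw [← hdist_eq]
    linarith
  have hlower : |p - r| / K - C - 2 * cH N K C ≤ |uy - uz| := by
    have t1 := dist_triangle (q (γ p)) (γ' uy) (γ' uz)
    have t2 := dist_triangle (q (γ p)) (γ' uz) (q (γ r))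
    rw [dist_comm (γ' uz) (q (γ r))] at t2
    rw [← hdist_eq]
    linarith
  have h1 : |uy - uz| ≤ |p' - r'| + 2 * cE N K C := by
    have t1 := abs_sub_le uy p' uz
    have t2 := abs_sub_le p' r' uz
    have t3 : |uy - p'| = |p' - uy| := abs_sub_comm _ _
    linarith [hkey_y, hkey_z]
  have h2 : |p' - r'| ≤ |uy - uz| + 2 * cE N K C := by
    have t1 := abs_sub_le p' uy r'
    have t2 := abs_sub_le uy uz r'
    have t3 : |uz - r'| = |r' - uz| := abs_sub_comm _ _
    linarith [hkey_y, hkey_z]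
  constructor
  · unfold cA
    linarith
  · unfold cA
    linarith
end
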